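/- arXiv:2106.11147 — 4 statements merged into one kernel-verified Lean document; each statement's English description precedes it below -/
import Mathlib

section
/- For every real number z > 0, one has sqrt(z) = (1/sqrt(2π)) ∫₀^∞ (1 - exp(-z t / 2)) t^{-3/2} dt. -/
open MeasureTheory Real Set Filter Topology

lemma berry_aux_one_sub_exp_le (x : ℝ) : 1 - Real.exp (-x) ≤ x := by
  have := Real.add_one_le_exp (-x)
  linarith

lemma berry_aux_nonneg {x : ℝ} (hx : 0 ≤ x) : 0 ≤ 1 - Real.exp (-x) := by
  have : Real.exp (-x) ≤ 1 := Real.exp_le_one_iff.mpr (by linarith)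
  linarith

/-- Berry's integral identity: for every real `z > 0`,
`√z = (1/√(2π)) ∫₀^∞ (1 - exp(-z t / 2)) t^{-3/2} dt`. -/
theorem berry_integral_identity (z : ℝ) (hz : 0 < z) :
    Real.sqrt z =
      (1 / Real.sqrt (2 * Real.pi)) *
        ∫ t in Set.Ioi (0 : ℝ), (1 - Real.exp (-z * t / 2)) * t ^ (-(3 : ℝ) / 2) := by
  set u : ℝ → ℝ := fun t => 1 - Real.exp (-z * t / 2) with hu_def
  set u' : ℝ → ℝ := fun t => z / 2 * Real.exp (-z * t / 2) with hu'_def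
  set v : ℝ → ℝ := fun t => -2 * t ^ (-(1 : ℝ) / 2) with hv_def
  set v' : ℝ → ℝ := fun t => t ^ (-(3 : ℝ) / 2) with hv'_def
  -- derivatives
  have hu : ∀ x ∈ Ioi (0 : ℝ), HasDerivAt u (u' x) x := by
    intro x _
    have h0 : HasDerivAt (fun t : ℝ => -z / 2 * t) (-z / 2) x := by
      simpa using (hasDerivAt_id x).const_mul (-z / 2)
    have h1 : HasDerivAt (fun t : ℝ => -z * t / 2) (-z / 2) x :=
      h0.congr_of_eventuallyEq (Filter.Eventually.of_forall fun t => by ring)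
    have h2 := h1.exp
    have h3 := h2.const_sub 1
    refine h3.congr_deriv ?_
    simp only [hu'_def]
    ring
  have hv : ∀ x ∈ Ioi (0 : ℝ), HasDerivAt v (v' x) x := by
    intro x hx
    have hx0 : x ≠ 0 := ne_of_gt hx
    have h1 : HasDerivAt (fun t : ℝ => t ^ (-(1 : ℝ) / 2))
        ((-(1 : ℝ) / 2) * x ^ (-(1 : ℝ) / 2 - 1)) x :=
      Real.hasDerivAt_rpow_const (Or.inl hx0)
    have h2 := h1.const_mul (-2 : ℝ)
    refine h2.congr_deriv ?_
    rw [hv'_def]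
    have : (-(1 : ℝ) / 2 - 1) = -(3 : ℝ) / 2 := by norm_num
    rw [this]
    ring
  -- integrability of u * v'
  have huv' : IntegrableOn (u * v') (Ioi (0 : ℝ)) := by
    have hsplit : Ioi (0 : ℝ) = Ioc 0 1 ∪ Ioi 1 := (Set.Ioc_union_Ioi_eq_Ioi zero_le_one).symm
    rw [hsplit]
    apply IntegrableOn.union
    · -- on (0, 1], bound by (z/2) * t^(-1/2)
      have hmeas : AEStronglyMeasurable (u * v') (volume.restrict (Ioc (0:ℝ) 1)) := by
        apply ContinuousOn.aestronglyMeasurable _ measurableSet_Ioc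
        intro t ht
        have hexp : Continuous (fun t : ℝ => Real.exp (-z * t / 2)) := by fun_prop
        exact (((continuous_const.sub hexp).continuousAt).mul
          (Real.continuousAt_rpow_const t _ (Or.inl (ne_of_gt ht.1)))).continuousWithinAt
      have hint : IntegrableOn (fun t : ℝ => z / 2 * t ^ (-(1 : ℝ) / 2)) (Ioc 0 1) := by
        have := (intervalIntegral.intervalIntegrable_rpow' (a := 0) (b := 1)
          (r := -(1 : ℝ) / 2) (by norm_num))
        rw [intervalIntegrable_iff_integrableOn_Ioc_of_le zero_le_one] at this
        exact this.const_mul _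
      refine Integrable.mono' hint hmeas ?_
      filter_upwards [ae_restrict_mem measurableSet_Ioc] with t ht
      have ht0 : 0 < t := ht.1
      have hb1 : 0 ≤ u t := by
        have : (0:ℝ) ≤ z * t / 2 := by positivity
        simpa [hu_def, neg_div, neg_mul, ← neg_div] using
          berry_aux_nonneg (x := z * t / 2) this
      have hb2 : u t ≤ z * t / 2 := by
        have := berry_aux_one_sub_exp_le (z * t / 2)
        simpa [hu_def, neg_mul, ← neg_div] using this
      have hv'pos : 0 < v' t := Real.rpow_pos_of_pos ht0 _
      rw [Real.norm_eq_abs, Pi.mul_apply, abs_of_nonneg (mul_nonneg hb1 hv'pos.le)]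
      calc u t * v' t ≤ (z * t / 2) * v' t := by
            exact mul_le_mul_of_nonneg_right hb2 hv'pos.le
        _ = z / 2 * (t * t ^ (-(3 : ℝ) / 2)) := by rw [hv'_def]; ring
        _ = z / 2 * t ^ (-(1 : ℝ) / 2) := by
            congr 1
            have : t * t ^ (-(3 : ℝ) / 2) = t ^ ((1 : ℝ) + -(3 : ℝ) / 2) := by
              rw [Real.rpow_add ht0, Real.rpow_one]
            rw [this]
            norm_num
    · -- on (1, ∞), bound by t^(-3/2)
      have hint : IntegrableOn (fun t : ℝ => t ^ (-(3 : ℝ) / 2)) (Ioi 1) :=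
        integrableOn_Ioi_rpow_of_lt (by norm_num) one_pos
      have hmeas : AEStronglyMeasurable (u * v') (volume.restrict (Ioi (1:ℝ))) := by
        apply ContinuousOn.aestronglyMeasurable _ measurableSet_Ioi
        intro t ht
        have hexp : Continuous (fun t : ℝ => Real.exp (-z * t / 2)) := by fun_prop
        exact (((continuous_const.sub hexp).continuousAt).mul
          (Real.continuousAt_rpow_const t _ (Or.inl (ne_of_gt (lt_trans one_pos ht))))).continuousWithinAt
      refine Integrable.mono' hint hmeas ?_
      filter_upwards [ae_restrict_mem measurableSet_Ioi] with t ht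
      have ht0 : (0:ℝ) < t := lt_trans one_pos ht
      have hb1 : 0 ≤ u t := by
        have : (0:ℝ) ≤ z * t / 2 := by positivity
        simpa [hu_def, neg_mul, ← neg_div] using berry_aux_nonneg (x := z * t / 2) this
      have hb2 : u t ≤ 1 := by
        have : 0 < Real.exp (-z * t / 2) := Real.exp_pos _
        simp only [hu_def]
        linarith
      have hv'pos : 0 < v' t := Real.rpow_pos_of_pos ht0 _
      rw [Real.norm_eq_abs, Pi.mul_apply, abs_of_nonneg (mul_nonneg hb1 hv'pos.le)]
      calc u t * v' t ≤ 1 * v' t := mul_le_mul_of_nonneg_right hb2 hv'pos.le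
        _ = t ^ (-(3 : ℝ) / 2) := by rw [one_mul, hv'_def]
  -- integrability of u' * v
  have hu'v : IntegrableOn (u' * v) (Ioi (0 : ℝ)) := by
    have h1 : IntegrableOn (fun t : ℝ => t ^ (-(1:ℝ)/2) * Real.exp (-(z/2) * t ^ (1:ℝ)))
        (Ioi (0:ℝ)) :=
      integrableOn_rpow_mul_exp_neg_mul_rpow (by norm_num) (by norm_num) (by positivity)
    have h2 := (h1.const_mul (-z : ℝ))
    refine IntegrableOn.congr_fun h2 (fun t ht => ?_) measurableSet_Ioi
    simp only [Pi.mul_apply, hu'_def, hv_def]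
    rw [Real.rpow_one]
    have : -(z/2) * t = -z * t / 2 := by ring
    rw [this]
    ring
  -- boundary limits
  have h_zero : Tendsto (u * v) (nhdsWithin 0 (Ioi (0:ℝ))) (𝓝 0) := by
    apply squeeze_zero_norm' (a := fun t => z * t ^ ((1:ℝ)/2))
    · filter_upwards [self_mem_nhdsWithin] with t ht
      have ht0 : (0:ℝ) < t := ht
      have hb1 : 0 ≤ u t := by
        have : (0:ℝ) ≤ z * t / 2 := by positivity
        simpa [hu_def, neg_mul, ← neg_div] using berry_aux_nonneg (x := z * t / 2) this
      have hb2 : u t ≤ z * t / 2 := by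
        have := berry_aux_one_sub_exp_le (z * t / 2)
        simpa [hu_def, neg_mul, ← neg_div] using this
      have hvpos : (0:ℝ) < t ^ (-(1:ℝ)/2) := Real.rpow_pos_of_pos ht0 _
      rw [Pi.mul_apply, Real.norm_eq_abs, hv_def]
      have habs : |u t * (-2 * t ^ (-(1:ℝ)/2))| = u t * (2 * t ^ (-(1:ℝ)/2)) := by
        rw [abs_mul, abs_of_nonneg hb1]
        congr 1
        rw [abs_mul]
        simp [abs_of_nonneg hvpos.le]
      rw [habs]
      calc u t * (2 * t ^ (-(1:ℝ)/2)) ≤ (z * t / 2) * (2 * t ^ (-(1:ℝ)/2)) := by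
            exact mul_le_mul_of_nonneg_right hb2 (by positivity)
        _ = z * (t * t ^ (-(1:ℝ)/2)) := by ring
        _ = z * t ^ ((1:ℝ)/2) := by
            congr 1
            have : t * t ^ (-(1 : ℝ) / 2) = t ^ ((1 : ℝ) + -(1 : ℝ) / 2) := by
              rw [Real.rpow_add ht0, Real.rpow_one]
            rw [this]
            norm_num
    · have : Tendsto (fun t : ℝ => t ^ ((1:ℝ)/2)) (nhdsWithin 0 (Ioi (0:ℝ))) (𝓝 0) := by
        have hc : ContinuousAt (fun t : ℝ => t ^ ((1:ℝ)/2)) 0 :=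
          Real.continuousAt_rpow_const 0 _ (Or.inr (by norm_num))
        have : Tendsto (fun t : ℝ => t ^ ((1:ℝ)/2)) (𝓝[>] (0:ℝ)) (𝓝 ((0:ℝ) ^ ((1:ℝ)/2))) :=
          hc.tendsto.mono_left nhdsWithin_le_nhds
        simpa [Real.zero_rpow (by norm_num : (1:ℝ)/2 ≠ 0)] using this
      simpa using this.const_mul z
  have h_infty : Tendsto (u * v) atTop (𝓝 0) := by
    apply squeeze_zero_norm' (a := fun t => 2 * t ^ (-((1:ℝ)/2)))
    · filter_upwards [eventually_gt_atTop (0:ℝ)] with t ht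
      have ht0 : (0:ℝ) < t := ht
      have hb1 : 0 ≤ u t := by
        have : (0:ℝ) ≤ z * t / 2 := by positivity
        simpa [hu_def, neg_mul, ← neg_div] using berry_aux_nonneg (x := z * t / 2) this
      have hb2 : u t ≤ 1 := by
        have : 0 < Real.exp (-z * t / 2) := Real.exp_pos _
        simp only [hu_def]; linarith
      have hvpos : (0:ℝ) < t ^ (-(1:ℝ)/2) := Real.rpow_pos_of_pos ht0 _
      rw [Pi.mul_apply, Real.norm_eq_abs, hv_def]
      have habs : |u t * (-2 * t ^ (-(1:ℝ)/2))| = u t * (2 * t ^ (-(1:ℝ)/2)) := by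
        rw [abs_mul, abs_of_nonneg hb1]
        congr 1
        rw [abs_mul]
        simp [abs_of_nonneg hvpos.le]
      rw [habs]
      have : u t * (2 * t ^ (-(1:ℝ)/2)) ≤ 1 * (2 * t ^ (-(1:ℝ)/2)) :=
        mul_le_mul_of_nonneg_right hb2 (by positivity)
      calc u t * (2 * t ^ (-(1:ℝ)/2)) ≤ 1 * (2 * t ^ (-(1:ℝ)/2)) := this
        _ = 2 * t ^ (-((1:ℝ)/2)) := by rw [one_mul]; norm_num
    · have := (tendsto_rpow_neg_atTop (by norm_num : (0:ℝ) < 1/2)).const_mul (2:ℝ)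
      simpa using this
  -- integration by parts
  have key := integral_Ioi_mul_deriv_eq_deriv_mul hu hv huv' hu'v h_zero h_infty
  -- compute ∫ u' * v
  have hgamma : ∫ t in Ioi (0:ℝ), t ^ ((1:ℝ)/2 - 1) * Real.exp (-(z/2 * t)) =
      (1 / (z/2)) ^ ((1:ℝ)/2) * Real.Gamma (1/2) :=
    Real.integral_rpow_mul_exp_neg_mul_Ioi (by norm_num) (by positivity)
  have hu'v_int : ∫ t in Ioi (0:ℝ), u' t * v t = -z * ((1 / (z/2)) ^ ((1:ℝ)/2) * √π) := by
    rw [← Real.Gamma_one_half_eq, ← hgamma, ← integral_const_mul]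
    refine setIntegral_congr_fun measurableSet_Ioi (fun t ht => ?_)
    simp only [hu'_def, hv_def]
    have h1 : ((1:ℝ)/2 - 1) = -(1:ℝ)/2 := by norm_num
    have h2 : -(z/2 * t) = -z * t / 2 := by ring
    rw [h1, h2]
    ring
  have hIoi : ∫ t in Set.Ioi (0:ℝ), (1 - Real.exp (-z * t / 2)) * t ^ (-(3 : ℝ) / 2)
      = ∫ t in Ioi (0:ℝ), u t * v' t := rfl
  rw [hIoi, key, hu'v_int]
  -- final algebra
  have hsqrt2 : (0:ℝ) < 2 * π := by positivity
  have h2z : (1 / (z/2)) ^ ((1:ℝ)/2) = Real.sqrt (2 / z) := by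
    rw [Real.sqrt_eq_rpow]
    congr 1
    field_simp
  rw [h2z]
  rw [Real.sqrt_div (by norm_num : (0:ℝ) ≤ 2) z, Real.sqrt_mul (by norm_num : (0:ℝ) ≤ 2) π]
  have hsz : Real.sqrt z ≠ 0 := by positivity
  have hzz : z = Real.sqrt z * Real.sqrt z := (Real.mul_self_sqrt hz.le).symm
  have hfin : (0:ℝ) - 0 - (-z * (Real.sqrt 2 / Real.sqrt z * Real.sqrt π))
      = Real.sqrt z * (Real.sqrt 2 * Real.sqrt π) := by
    field_simp
    linear_combination (Real.sqrt 2 * Real.sqrt π) * hzz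
  rw [hfin]
  have hs2 : Real.sqrt 2 ≠ 0 := by positivity
  have hsp : Real.sqrt π ≠ 0 := Real.sqrt_ne_zero'.mpr Real.pi_pos
  field_simp
end

section
/- For every positive real α and every positive integer d, ∫₀^∞ (1 - (1 + α t)^{-d/2}) t^{-3/2} dt = sqrt(4πα) · Γ((d+1)/2) / Γ(d/2). -/
open MeasureTheory Real


/-- Real Beta integral on (0,1). -/
lemma realBeta (a b : ℝ) (ha : 0 < a) (hb : 0 < b) :
    ∫ x in Set.Ioo (0:ℝ) 1, x ^ (a-1) * (1-x) ^ (b-1)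
      = Real.Gamma a * Real.Gamma b / Real.Gamma (a+b) := by
  have key := Complex.Gamma_mul_Gamma_eq_betaIntegral (s := (a:ℂ)) (t := (b:ℂ))
    (by simpa using ha) (by simpa using hb)
  have hcongr : ∀ x ∈ Set.Ioo (0:ℝ) 1,
      (x:ℂ) ^ ((a:ℂ)-1) * (1-(x:ℂ)) ^ ((b:ℂ)-1)
        = ((x ^ (a-1) * (1-x) ^ (b-1) : ℝ) : ℂ) := by
    intro x hx
    rw [show ((a:ℂ)-1) = ((a-1 : ℝ) : ℂ) by push_cast; ring,
        show ((b:ℂ)-1) = ((b-1 : ℝ) : ℂ) by push_cast; ring,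
        show (1-(x:ℂ)) = ((1-x : ℝ):ℂ) by push_cast; ring,
        ← Complex.ofReal_cpow hx.1.le, ← Complex.ofReal_cpow (by linarith [hx.2]),
        ← Complex.ofReal_mul]
  have hbeta : Complex.betaIntegral a b
      = ((∫ x in Set.Ioo (0:ℝ) 1, x ^ (a-1) * (1-x) ^ (b-1) : ℝ) : ℂ) := by
    rw [Complex.betaIntegral, intervalIntegral.integral_of_le zero_le_one,
      MeasureTheory.integral_Ioc_eq_integral_Ioo,
      MeasureTheory.setIntegral_congr_fun measurableSet_Ioo hcongr]
    exact integral_ofReal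
  have hG : ∀ y : ℝ, Complex.Gamma (y:ℂ) = (Real.Gamma y : ℂ) := fun y =>
    Complex.Gamma_ofReal y
  rw [hG, hG, hbeta] at key
  have hab : Real.Gamma (a+b) ≠ 0 := (Real.Gamma_pos_of_pos (by linarith)).ne'
  rw [show ((a:ℂ)+(b:ℂ)) = ((a+b:ℝ):ℂ) by push_cast; ring, hG] at key
  have key2 : Real.Gamma a * Real.Gamma b
      = Real.Gamma (a+b) * ∫ x in Set.Ioo (0:ℝ) 1, x ^ (a-1) * (1-x) ^ (b-1) := by
    exact_mod_cast key
  field_simp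
  linarith [key2]
open MeasureTheory Real Set Filter

lemma mapderiv : ∀ x ∈ Set.Ioo (0:ℝ) 1,
    HasDerivWithinAt (fun x : ℝ => x / (1-x)) (((1-x)^(2:ℕ))⁻¹) (Set.Ioo (0:ℝ) 1) x := by
  intro x hx
  have hne : (1:ℝ) - x ≠ 0 := by have := hx.2; intro h; linarith [sub_eq_zero.mp h]
  have := (hasDerivAt_id x).div ((hasDerivAt_const x (1:ℝ)).sub (hasDerivAt_id x)) hne
  have h2 : (1 * ((fun x : ℝ => (1:ℝ)) - (id : ℝ → ℝ)) x - id x * (0 - 1)) / ((fun x : ℝ => (1:ℝ)) - (id : ℝ → ℝ)) x ^ 2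
      = ((1-x)^(2:ℕ))⁻¹ := by
    simp only [id, Pi.sub_apply]; field_simp; ring
  rw [h2] at this
  exact this.hasDerivWithinAt

lemma mapinj : Set.InjOn (fun x : ℝ => x / (1-x)) (Set.Ioo (0:ℝ) 1) := by
  intro x hx y hy h
  have hx1 : (1:ℝ) - x ≠ 0 := by have := hx.2; intro h'; linarith [sub_eq_zero.mp h']
  have hy1 : (1:ℝ) - y ≠ 0 := by have := hy.2; intro h'; linarith [sub_eq_zero.mp h']
  field_simp at h
  nlinarith [h]

lemma mapimage : (fun x : ℝ => x / (1-x)) '' Set.Ioo (0:ℝ) 1 = Set.Ioi (0:ℝ) := by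
  ext t
  constructor
  · rintro ⟨x, hx, rfl⟩
    exact div_pos hx.1 (by linarith [hx.2])
  · intro ht
    refine ⟨t / (1+t), ⟨div_pos ht (by linarith [ht.out]), ?_⟩, ?_⟩
    · rw [div_lt_one (by linarith [ht.out])]; linarith [ht.out]
    · have h1t : (1:ℝ) + t ≠ 0 := by have := ht.out; positivity
      show (t/(1+t)) / (1 - t/(1+t)) = t
      have h2 : 1 - t / (1+t) = 1 / (1+t) := by field_simp; ring
      rw [h2]; field_simp

lemma betaIoi_core (a b : ℝ) (ha : 0 < a) (hb : 0 < b) :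
    ∀ x ∈ Set.Ioo (0:ℝ) 1,
      |((1-x)^(2:ℕ))⁻¹| • ((x/(1-x)) ^ (a-1) * (1+(x/(1-x))) ^ (-(a+b)))
        = x ^ (a-1) * (1-x) ^ (b-1) := by
  intro x hx
  have hy : (0:ℝ) < 1 - x := by linarith [hx.2]
  have hx0 := hx.1
  have h1 : 1 + x/(1-x) = (1-x)⁻¹ := by field_simp; ring
  have habs : |((1-x)^(2:ℕ))⁻¹| = (1-x) ^ (-(2:ℝ)) := by
    rw [abs_of_pos (by positivity), ← Real.rpow_natCast (1-x) 2, ← Real.rpow_neg hy.le]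
    norm_num
  rw [smul_eq_mul, habs, h1, Real.div_rpow hx0.le hy.le,
    Real.inv_rpow hy.le (-(a+b)), ← Real.rpow_neg hy.le, neg_neg,
    div_eq_mul_inv, ← Real.rpow_neg hy.le (a-1)]
  rw [show (1-x) ^ (-(2:ℝ)) * (x ^ (a-1) * (1-x) ^ (-(a-1)) * (1-x) ^ (a+b))
      = x ^ (a-1) * ((1-x) ^ (-(2:ℝ)) * (1-x) ^ (-(a-1)) * (1-x) ^ (a+b)) by ring,
    ← Real.rpow_add hy, ← Real.rpow_add hy]
  ring_nf

lemma betaIoi (a b : ℝ) (ha : 0 < a) (hb : 0 < b) :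
    ∫ t in Set.Ioi (0:ℝ), t ^ (a-1) * (1+t) ^ (-(a+b))
      = Real.Gamma a * Real.Gamma b / Real.Gamma (a+b) := by
  rw [← mapimage,
    MeasureTheory.integral_image_eq_integral_abs_deriv_smul measurableSet_Ioo mapderiv mapinj,
    MeasureTheory.setIntegral_congr_fun measurableSet_Ioo (betaIoi_core a b ha hb)]
  exact realBeta a b ha hb
open MeasureTheory Real Set Filter

-- key elementary inequality: 1 - (1+t)^(-p) ≤ p*t for t ≥ 0, p > 0
lemma u_le {p t : ℝ} (hp : 0 < p) (ht : 0 ≤ t) : 1 - (1+t) ^ (-p) ≤ p * t := by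
  have h1t : (0:ℝ) < 1 + t := by linarith
  have hlog : Real.log (1+t) ≤ t := by
    have := Real.log_le_sub_one_of_pos h1t; linarith
  have hlog0 : 0 ≤ Real.log (1+t) := Real.log_nonneg (by linarith)
  have hexp : Real.log (1+t) * (-p) + 1 ≤ Real.exp (Real.log (1+t) * (-p)) :=
    Real.add_one_le_exp _
  rw [Real.rpow_def_of_pos h1t]
  nlinarith [mul_le_mul_of_nonneg_left hlog hp.le]

lemma u_nonneg {p t : ℝ} (hp : 0 < p) (ht : 0 ≤ t) : 0 ≤ 1 - (1+t) ^ (-p) := by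
  have : (1+t) ^ (-p) ≤ 1 :=
    Real.rpow_le_one_of_one_le_of_nonpos (by linarith) (by linarith)
  linarith

lemma u_deriv {p : ℝ} (t : ℝ) (ht : (0:ℝ) < 1 + t) :
    HasDerivAt (fun t : ℝ => 1 - (1+t) ^ (-p)) (p * (1+t) ^ (-p-1)) t := by
  have h1 : HasDerivAt (fun t : ℝ => 1 + t) 1 t := (hasDerivAt_id t).const_add 1
  have h2 := (Real.hasDerivAt_rpow_const (x := 1+t) (p := -p) (Or.inl ht.ne')).comp t h1
  have h3 := (hasDerivAt_const t (1:ℝ)).sub h2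
  exact h3.congr_deriv (by ring)

lemma v_deriv {t : ℝ} (ht : 0 < t) :
    HasDerivAt (fun t : ℝ => -2 * t ^ (-(1:ℝ)/2)) (t ^ (-(3:ℝ)/2)) t := by
  have h := (Real.hasDerivAt_rpow_const (x := t) (p := -(1:ℝ)/2) (Or.inl ht.ne')).const_mul (-2)
  exact h.congr_deriv (by rw [show -(1:ℝ)/2 - 1 = -(3:ℝ)/2 by norm_num]; ring)

-- integrand continuous hence measurable on Ioi 0
lemma integrand_cont (p : ℝ) :
    ContinuousOn (fun t : ℝ => (1 - (1+t) ^ (-p)) * t ^ (-(3:ℝ)/2)) (Set.Ioi 0) := by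
  apply ContinuousOn.mul
  · exact continuousOn_const.sub (((continuous_const.add continuous_id).continuousOn).rpow_const
      (fun t ht => Or.inl (by have : (0:ℝ) < t := ht; show (1:ℝ) + t ≠ 0; positivity)))
  · exact continuousOn_id.rpow_const (fun t ht => Or.inl (ne_of_gt ht))

lemma integrand_integrable {p : ℝ} (hp : 0 < p) :
    IntegrableOn (fun t : ℝ => (1 - (1+t) ^ (-p)) * t ^ (-(3:ℝ)/2)) (Set.Ioi 0) := by
  have hmeas : AEStronglyMeasurable (fun t : ℝ => (1 - (1+t) ^ (-p)) * t ^ (-(3:ℝ)/2))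
      (volume.restrict (Set.Ioi (0:ℝ))) :=
    (integrand_cont p).aestronglyMeasurable measurableSet_Ioi
  have hsplit : Set.Ioi (0:ℝ) = Set.Ioc 0 1 ∪ Set.Ioi 1 := by
    rw [Set.Ioc_union_Ioi_eq_Ioi]; norm_num
  rw [hsplit]
  apply MeasureTheory.IntegrableOn.union
  · -- on (0,1]: bound by p * t^(-1/2)
    have hg : IntegrableOn (fun t : ℝ => p * t ^ (-(1:ℝ)/2)) (Set.Ioc (0:ℝ) 1) := by
      apply Integrable.const_mul
      exact (intervalIntegrable_iff_integrableOn_Ioc_of_le zero_le_one).mp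
        (intervalIntegral.intervalIntegrable_rpow' (by norm_num))
    apply Integrable.mono' hg (hmeas.mono_measure
      (Measure.restrict_mono (by rw [hsplit]; exact Set.subset_union_left) le_rfl))
    filter_upwards [ae_restrict_mem measurableSet_Ioc] with t ht
    have ht0 : 0 < t := ht.1
    have h1 := u_le hp ht0.le
    have h2 := u_nonneg hp ht0.le
    have h3 : (0:ℝ) ≤ t ^ (-(3:ℝ)/2) := Real.rpow_nonneg ht0.le _
    rw [Real.norm_eq_abs, abs_of_nonneg (mul_nonneg h2 h3)]
    calc (1 - (1+t) ^ (-p)) * t ^ (-(3:ℝ)/2) ≤ (p * t) * t ^ (-(3:ℝ)/2) := by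
          exact mul_le_mul_of_nonneg_right h1 h3
      _ = p * t ^ (-(1:ℝ)/2) := by
          rw [mul_assoc]
          congr 1
          calc t * t ^ (-(3:ℝ)/2) = t ^ (1:ℝ) * t ^ (-(3:ℝ)/2) := by rw [Real.rpow_one]
            _ = t ^ ((1:ℝ) + -(3:ℝ)/2) := (Real.rpow_add ht0 _ _).symm
            _ = t ^ (-(1:ℝ)/2) := by norm_num
  · -- on (1,∞): bound by t^(-3/2)
    have hg : IntegrableOn (fun t : ℝ => t ^ (-(3:ℝ)/2)) (Set.Ioi (1:ℝ)) := by
      apply integrableOn_Ioi_rpow_of_lt (by norm_num) one_pos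
    apply Integrable.mono' hg (hmeas.mono_measure
      (Measure.restrict_mono (by rw [hsplit]; exact Set.subset_union_right) le_rfl))
    filter_upwards [ae_restrict_mem measurableSet_Ioi] with t ht
    have ht0 : (0:ℝ) < t := lt_trans one_pos ht
    have h2 := u_nonneg hp ht0.le
    have h3 : (0:ℝ) ≤ t ^ (-(3:ℝ)/2) := Real.rpow_nonneg ht0.le _
    rw [Real.norm_eq_abs, abs_of_nonneg (mul_nonneg h2 h3)]
    have hle : 1 - (1+t) ^ (-p) ≤ 1 := by
      have : (0:ℝ) ≤ (1+t) ^ (-p) := Real.rpow_nonneg (by linarith) _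
      linarith
    nlinarith
open MeasureTheory Real Set Filter

lemma cpow_eq_ofReal {a b : ℝ} : ∀ x ∈ Set.Ioo (0:ℝ) 1,
    (x:ℂ) ^ ((a:ℂ)-1) * (1-(x:ℂ)) ^ ((b:ℂ)-1)
      = ((x ^ (a-1) * (1-x) ^ (b-1) : ℝ) : ℂ) := by
  intro x hx
  rw [show ((a:ℂ)-1) = ((a-1 : ℝ) : ℂ) by push_cast; ring,
      show ((b:ℂ)-1) = ((b-1 : ℝ) : ℂ) by push_cast; ring,
      show (1-(x:ℂ)) = ((1-x : ℝ):ℂ) by push_cast; ring,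
      ← Complex.ofReal_cpow hx.1.le, ← Complex.ofReal_cpow (by linarith [hx.2]),
      ← Complex.ofReal_mul]

lemma betaIoo_int (a b : ℝ) (ha : 0 < a) (hb : 0 < b) :
    IntegrableOn (fun x : ℝ => x ^ (a-1) * (1-x) ^ (b-1)) (Set.Ioo 0 1) := by
  have h := (Complex.betaIntegral_convergent (u := (a:ℂ)) (v := (b:ℂ))
    (by simpa using ha) (by simpa using hb)).norm
  have h2 : IntegrableOn (fun x : ℝ => ‖(x:ℂ) ^ ((a:ℂ)-1) * (1-(x:ℂ)) ^ ((b:ℂ)-1)‖)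
      (Set.Ioo (0:ℝ) 1) :=
    (intervalIntegrable_iff_integrableOn_Ioo_of_le zero_le_one).mp h
  apply h2.congr_fun ?_ measurableSet_Ioo
  intro x hx
  dsimp only
  rw [cpow_eq_ofReal x hx, Complex.norm_real, Real.norm_eq_abs, abs_of_nonneg]
  exact mul_nonneg (Real.rpow_nonneg hx.1.le _) (Real.rpow_nonneg (by linarith [hx.2]) _)

lemma betaIoi_int (a b : ℝ) (ha : 0 < a) (hb : 0 < b) :
    IntegrableOn (fun t : ℝ => t ^ (a-1) * (1+t) ^ (-(a+b))) (Set.Ioi 0) := by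
  rw [show Set.Ioi (0:ℝ) = (fun x : ℝ => x / (1-x)) '' Set.Ioo 0 1 from mapimage.symm,
    MeasureTheory.integrableOn_image_iff_integrableOn_abs_deriv_smul
      measurableSet_Ioo mapderiv mapinj]
  exact (betaIoo_int a b ha hb).congr_fun (fun x hx => (betaIoi_core a b ha hb x hx).symm)
    measurableSet_Ioo

set_option maxHeartbeats 1000000 in
lemma Ip (p : ℝ) (hp : 0 < p) :
    ∫ t in Set.Ioi (0:ℝ), (1 - (1+t) ^ (-p)) * t ^ (-(3:ℝ)/2)
      = 2 * Real.sqrt Real.pi * Real.Gamma (p + 1/2) / Real.Gamma p := by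
  have hu : ∀ x ∈ Set.Ioi (0:ℝ),
      HasDerivAt (fun t : ℝ => 1 - (1+t) ^ (-p)) (p * (1+x) ^ (-(p+1))) x := by
    intro x hx
    have h := u_deriv (p := p) x (by have := hx.out; linarith)
    convert h using 1
    rw [show -(p+1) = -p-1 by ring]
  have hv : ∀ x ∈ Set.Ioi (0:ℝ),
      HasDerivAt (fun t : ℝ => -2 * t ^ (-(1:ℝ)/2)) (x ^ (-(3:ℝ)/2)) x :=
    fun x hx => v_deriv hx.out
  have hint : IntegrableOn (fun t : ℝ => t ^ (-(1:ℝ)/2) * (1+t) ^ (-(p+1))) (Set.Ioi 0) := by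
    have h := betaIoi_int (1/2) (p + 1/2) (by norm_num) (by linarith)
    simp only [show ((1:ℝ)/2 - 1) = -(1:ℝ)/2 from by norm_num,
      show ((1:ℝ)/2 + (p + 1/2)) = p + 1 from by ring] at h
    exact h
  have huv' : IntegrableOn
      ((fun t : ℝ => 1 - (1+t) ^ (-p)) * (fun t : ℝ => t ^ (-(3:ℝ)/2))) (Set.Ioi 0) :=
    (integrand_integrable hp).congr_fun (fun t _ => rfl) measurableSet_Ioi
  have hu'v : IntegrableOn
      ((fun t : ℝ => p * (1+t) ^ (-(p+1))) * (fun t : ℝ => -2 * t ^ (-(1:ℝ)/2))) (Set.Ioi 0) := by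
    apply MeasureTheory.IntegrableOn.congr_fun (hint.const_mul (-2*p)) _ measurableSet_Ioi
    intro t _
    simp only [Pi.mul_apply]
    ring
  have hb1 : ∀ t : ℝ, 0 < t → ‖(1 - (1+t) ^ (-p)) * (-2 * t ^ (-(1:ℝ)/2))‖
      = (1 - (1+t) ^ (-p)) * (2 * t ^ (-(1:ℝ)/2)) := by
    intro t ht
    have h2 := u_nonneg hp ht.le
    have h3 : (0:ℝ) ≤ t ^ (-(1:ℝ)/2) := Real.rpow_nonneg ht.le _
    rw [norm_mul, Real.norm_eq_abs, Real.norm_eq_abs, abs_of_nonneg h2]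
    rw [abs_mul, abs_neg, abs_two, abs_of_nonneg h3]
  have h_zero : Tendsto ((fun t : ℝ => 1 - (1+t) ^ (-p)) * (fun t : ℝ => -2 * t ^ (-(1:ℝ)/2)))
      (nhdsWithin 0 (Set.Ioi 0)) (nhds 0) := by
    apply squeeze_zero_norm' (a := fun t : ℝ => 2 * p * t ^ ((1:ℝ)/2))
    · filter_upwards [self_mem_nhdsWithin] with t (ht : (0:ℝ) < t)
      rw [Pi.mul_apply, hb1 t ht]
      have h1 := u_le hp ht.le
      have h3 : (0:ℝ) ≤ t ^ (-(1:ℝ)/2) := Real.rpow_nonneg ht.le _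
      have h4 : t * t ^ (-(1:ℝ)/2) = t ^ ((1:ℝ)/2) := by
        calc t * t ^ (-(1:ℝ)/2) = t ^ (1:ℝ) * t ^ (-(1:ℝ)/2) := by rw [Real.rpow_one]
          _ = t ^ ((1:ℝ) + -(1:ℝ)/2) := (Real.rpow_add ht _ _).symm
          _ = t ^ ((1:ℝ)/2) := by norm_num
      calc (1 - (1+t) ^ (-p)) * (2 * t ^ (-(1:ℝ)/2))
          ≤ (p*t) * (2 * t ^ (-(1:ℝ)/2)) := mul_le_mul_of_nonneg_right h1 (by positivity)
        _ = 2 * p * (t * t ^ (-(1:ℝ)/2)) := by ring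
        _ = 2 * p * t ^ ((1:ℝ)/2) := by rw [h4]
    · have hc : Tendsto (fun t : ℝ => t ^ ((1:ℝ)/2)) (nhdsWithin 0 (Set.Ioi 0)) (nhds 0) := by
        have := (Real.continuousAt_rpow_const 0 ((1:ℝ)/2)
          (Or.inr (by norm_num))).continuousWithinAt (s := Set.Ioi 0)
        simpa [ContinuousWithinAt, Real.zero_rpow (by norm_num : ((1:ℝ)/2) ≠ 0)] using this
      simpa using hc.const_mul (2*p)
  have h_infty : Tendsto ((fun t : ℝ => 1 - (1+t) ^ (-p)) * (fun t : ℝ => -2 * t ^ (-(1:ℝ)/2)))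
      atTop (nhds 0) := by
    apply squeeze_zero_norm' (a := fun t : ℝ => 2 * t ^ (-(1:ℝ)/2))
    · filter_upwards [eventually_gt_atTop (0:ℝ)] with t ht
      rw [Pi.mul_apply, hb1 t ht]
      have h3 : (0:ℝ) ≤ t ^ (-(1:ℝ)/2) := Real.rpow_nonneg ht.le _
      have hle : 1 - (1+t) ^ (-p) ≤ 1 := by
        have : (0:ℝ) ≤ (1+t) ^ (-p) := Real.rpow_nonneg (by linarith) _
        linarith
      nlinarith [u_nonneg hp ht.le]
    · have := (tendsto_rpow_neg_atTop (y := (1:ℝ)/2) (by norm_num)).const_mul 2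
      simp only [mul_zero] at this
      convert this using 2 with t
      norm_num
  have key := MeasureTheory.integral_Ioi_mul_deriv_eq_deriv_mul hu hv huv' hu'v h_zero h_infty
  have hJ : ∫ t in Set.Ioi (0:ℝ), (p * (1+t) ^ (-(p+1))) * (-2 * t ^ (-(1:ℝ)/2))
      = (-2*p) * ∫ t in Set.Ioi (0:ℝ), t ^ (-(1:ℝ)/2) * (1+t) ^ (-(p+1)) := by
    rw [← MeasureTheory.integral_const_mul]
    apply MeasureTheory.setIntegral_congr_fun measurableSet_Ioi
    intro t _
    ring
  have hbeta : ∫ t in Set.Ioi (0:ℝ), t ^ (-(1:ℝ)/2) * (1+t) ^ (-(p+1))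
      = Real.Gamma (1/2) * Real.Gamma (p + 1/2) / Real.Gamma (p+1) := by
    have h := betaIoi (1/2) (p + 1/2) (by norm_num) (by linarith)
    simp only [show ((1:ℝ)/2 - 1) = -(1:ℝ)/2 from by norm_num,
      show ((1:ℝ)/2 + (p + 1/2)) = p + 1 from by ring] at h
    exact h
  rw [key, hJ, hbeta]
  have hGp : Real.Gamma p ≠ 0 := (Real.Gamma_pos_of_pos hp).ne'
  have hGp1 : Real.Gamma (p + 1) = p * Real.Gamma p := Real.Gamma_add_one hp.ne'
  rw [hGp1, Real.Gamma_one_half_eq]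
  field_simp
  ring

/-- For every positive real `α` and positive integer `d`,
`∫₀^∞ (1 - (1 + α t)^{-d/2}) t^{-3/2} dt = √(4πα) · Γ((d+1)/2) / Γ(d/2)`. -/
theorem upsilon_alpha_id (α : ℝ) (hα : 0 < α) (d : ℕ) (hd : 0 < d) :
    ∫ t in Set.Ioi (0 : ℝ), (1 - (1 + α * t) ^ (-(d : ℝ) / 2)) * t ^ (-(3 : ℝ) / 2) =
      Real.sqrt (4 * Real.pi * α) * Real.Gamma (((d : ℝ) + 1) / 2) / Real.Gamma ((d : ℝ) / 2) := by
  set p : ℝ := (d : ℝ) / 2 with hp_def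
  have hp : 0 < p := by
    have : (1:ℝ) ≤ (d:ℝ) := by exact_mod_cast hd
    simp only [hp_def]; linarith
  have hstep1 : ∫ t in Set.Ioi (0 : ℝ), (1 - (1 + α * t) ^ (-(d : ℝ) / 2)) * t ^ (-(3 : ℝ) / 2)
      = α ^ ((3:ℝ)/2) * ∫ t in Set.Ioi (0:ℝ),
          (1 - (1 + α * t) ^ (-p)) * (α * t) ^ (-(3:ℝ)/2) := by
    rw [← MeasureTheory.integral_const_mul]
    apply MeasureTheory.setIntegral_congr_fun measurableSet_Ioi
    intro t ht
    dsimp only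
    have ht0 : (0:ℝ) < t := ht
    have hmul : (α * t) ^ (-(3:ℝ)/2) = α ^ (-(3:ℝ)/2) * t ^ (-(3:ℝ)/2) :=
      Real.mul_rpow hα.le ht0.le
    have hαα : α ^ ((3:ℝ)/2) * α ^ (-(3:ℝ)/2) = 1 := by
      rw [← Real.rpow_add hα]; norm_num
    rw [show (-(d : ℝ) / 2) = -p by rw [hp_def]; ring]
    rw [hmul]
    calc (1 - (1 + α * t) ^ (-p)) * t ^ (-(3:ℝ)/2)
        = (α ^ ((3:ℝ)/2) * α ^ (-(3:ℝ)/2)) * ((1 - (1 + α * t) ^ (-p)) * t ^ (-(3:ℝ)/2)) := by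
          rw [hαα]; ring
      _ = α ^ ((3:ℝ)/2) * ((1 - (1 + α * t) ^ (-p)) * (α ^ (-(3:ℝ)/2) * t ^ (-(3:ℝ)/2))) := by
          ring
  have hstep2 : (∫ t in Set.Ioi (0:ℝ), (1 - (1 + α * t) ^ (-p)) * (α * t) ^ (-(3:ℝ)/2))
      = α⁻¹ * ∫ u in Set.Ioi (0:ℝ), (1 - (1 + u) ^ (-p)) * u ^ (-(3:ℝ)/2) := by
    have := MeasureTheory.integral_comp_mul_left_Ioi
      (g := fun u : ℝ => (1 - (1 + u) ^ (-p)) * u ^ (-(3:ℝ)/2)) 0 hα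
    simp only [mul_zero, smul_eq_mul] at this
    exact this
  rw [hstep1, hstep2, Ip p hp]
  have h1 : α ^ ((3:ℝ)/2) * α⁻¹ = α ^ ((1:ℝ)/2) := by
    rw [← Real.rpow_neg_one α, ← Real.rpow_add hα]; norm_num
  have h2 : Real.sqrt (4 * Real.pi * α) = 2 * Real.sqrt Real.pi * α ^ ((1:ℝ)/2) := by
    rw [Real.sqrt_mul (by positivity) α, Real.sqrt_mul (by norm_num) Real.pi,
      show Real.sqrt 4 = 2 by rw [show (4:ℝ) = 2^2 by norm_num, Real.sqrt_sq (by norm_num)],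
      Real.sqrt_eq_rpow α]
  have h3 : p + 1/2 = ((d:ℝ) + 1) / 2 := by rw [hp_def]; ring
  rw [← mul_assoc, h1, h2, h3]
  ring
end

section
/- Let Ω be a d×d real symmetric positive definite matrix. Then the matrix Ψ(Ω) := ∫₀^∞ t^{-1/2} det(I_d + tΩ)^{-1/2} (I_d + tΩ)^{-1} dt is a well-defined (finite) symmetric positive definite matrix, provided d ≥ 2. -/
set_option maxHeartbeats 1000000

open MeasureTheory Matrix

section Aux

variable {d : ℕ} {Ω : Matrix (Fin d) (Fin d) ℝ}

private lemma psi_aux_posdef (hpos : Ω.PosDef) {t : ℝ} (ht : 0 ≤ t) :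
    ((1 : Matrix (Fin d) (Fin d) ℝ) + t • Ω).PosDef := by
  have hΩ : Ωᵀ = Ω := by
    exact (show Ω.IsSymm by simpa [Matrix.conjTranspose_eq_transpose_of_trivial] using hpos.1).eq
  refine Matrix.PosDef.of_dotProduct_mulVec_pos ?_ fun x hx => ?_
  · show _ᴴ = _
    rw [Matrix.conjTranspose_eq_transpose_of_trivial, Matrix.transpose_add,
      Matrix.transpose_one, Matrix.transpose_smul, hΩ]
  · rw [Matrix.add_mulVec, Matrix.one_mulVec, dotProduct_add,
      Matrix.smul_mulVec, dotProduct_smul, smul_eq_mul]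
    exact add_pos_of_pos_of_nonneg (Matrix.dotProduct_star_self_pos_iff.mpr hx)
      (mul_nonneg ht (hpos.posSemidef.dotProduct_mulVec_nonneg x))

private lemma psi_aux_det (hpos : Ω.PosDef) (t : ℝ) :
    ((1 : Matrix (Fin d) (Fin d) ℝ) + t • Ω).det
      = ∏ i, (1 + t * hpos.1.eigenvalues i) := by
  set U : Matrix (Fin d) (Fin d) ℝ := (hpos.1.eigenvectorUnitary : Matrix (Fin d) (Fin d) ℝ)
    with hUdef
  have hUU : U * star U = 1 := Matrix.mem_unitaryGroup_iff.mp (hpos.1.eigenvectorUnitary).2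
  have hUU' : star U * U = 1 := Matrix.mem_unitaryGroup_iff'.mp (hpos.1.eigenvectorUnitary).2
  have hdiag : (Matrix.diagonal fun i => 1 + t * hpos.1.eigenvalues i)
      = 1 + t • Matrix.diagonal hpos.1.eigenvalues := by
    ext k l
    rcases eq_or_ne k l with rfl | h
    · simp [Matrix.one_apply_eq]
    · simp [Matrix.diagonal_apply_ne _ h, Matrix.one_apply_ne h]
  have hspec : Ω = U * Matrix.diagonal hpos.1.eigenvalues * star U := by
    have h := hpos.1.spectral_theorem
    simpa [RCLike.ofReal_real_eq_id, Function.comp] using h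
  have key : (1 : Matrix (Fin d) (Fin d) ℝ) + t • Ω
      = U * (Matrix.diagonal fun i => 1 + t * hpos.1.eigenvalues i) * star U := by
    have h1 : U * (Matrix.diagonal fun i => 1 + t * hpos.1.eigenvalues i) * star U
        = U * star U + t • (U * Matrix.diagonal hpos.1.eigenvalues * star U) := by
      rw [hdiag, Matrix.mul_add, Matrix.add_mul, Matrix.mul_one, Matrix.mul_smul,
        Matrix.smul_mul]
    rw [h1, hUU, ← hspec]
  rw [key, Matrix.det_mul, Matrix.det_mul]
  have : U.det * (Matrix.diagonal fun i => 1 + t * hpos.1.eigenvalues i).det * (star U).det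
      = (Matrix.diagonal fun i => 1 + t * hpos.1.eigenvalues i).det * ((star U).det * U.det) := by
    ring
  rw [this, ← Matrix.det_mul, hUU', Matrix.det_one, mul_one, Matrix.det_diagonal]

private lemma psi_aux_det_ge_one (hpos : Ω.PosDef) {t : ℝ} (ht : 0 ≤ t) :
    1 ≤ ((1 : Matrix (Fin d) (Fin d) ℝ) + t • Ω).det := by
  rw [psi_aux_det hpos t]
  calc (1 : ℝ) = ∏ _i : Fin d, 1 := by simp
    _ ≤ ∏ i, (1 + t * hpos.1.eigenvalues i) :=
        Finset.prod_le_prod (fun _ _ => zero_le_one) fun i _ => by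
          nlinarith [hpos.eigenvalues_pos i]

private lemma psi_aux_det_ge (hpos : Ω.PosDef) {t : ℝ} (ht : 0 ≤ t) :
    t ^ d * Ω.det ≤ ((1 : Matrix (Fin d) (Fin d) ℝ) + t • Ω).det := by
  rw [psi_aux_det hpos t]
  have hdet : Ω.det = ∏ i, hpos.1.eigenvalues i := by
    simpa [RCLike.ofReal_real_eq_id] using hpos.1.det_eq_prod_eigenvalues
  have h1 : t ^ d * Ω.det = ∏ i : Fin d, (t * hpos.1.eigenvalues i) := by
    rw [hdet, Finset.prod_mul_distrib, Finset.prod_const, Finset.card_univ, Fintype.card_fin]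
  rw [h1]
  exact Finset.prod_le_prod
    (fun i _ => mul_nonneg ht (hpos.eigenvalues_pos i).le)
    (fun i _ => by linarith)

private lemma psi_aux_inv_symm (hsym : Ω.IsSymm) (t : ℝ) :
    (((1 : Matrix (Fin d) (Fin d) ℝ) + t • Ω)⁻¹)ᵀ
      = ((1 : Matrix (Fin d) (Fin d) ℝ) + t • Ω)⁻¹ := by
  rw [Matrix.transpose_nonsing_inv, Matrix.transpose_add, Matrix.transpose_one,
    Matrix.transpose_smul, hsym]

private lemma psi_aux_entry_bound (hpos : Ω.PosDef) (hsym : Ω.IsSymm) {t : ℝ} (ht : 0 ≤ t)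
    (i j : Fin d) :
    |((1 : Matrix (Fin d) (Fin d) ℝ) + t • Ω)⁻¹ i j| ≤ 1 := by
  set Mt : Matrix (Fin d) (Fin d) ℝ := (1 : Matrix (Fin d) (Fin d) ℝ) + t • Ω with hMtdef
  have hMt : Mt.PosDef := psi_aux_posdef hpos ht
  have hA : (Mt⁻¹).PosDef := hMt.inv
  have hdiag : ∀ k, 0 ≤ Mt⁻¹ k k ∧ Mt⁻¹ k k ≤ 1 := by
    intro k
    set z : Fin d → ℝ := Mt⁻¹ *ᵥ Pi.single k 1 with hzdef
    have hzk : z k = Mt⁻¹ k k := by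
      simp [hzdef, Matrix.mulVec_single]
    have hMz : Mt *ᵥ z = Pi.single k 1 := by
      rw [hzdef, Matrix.mulVec_mulVec, Matrix.mul_nonsing_inv _ hMt.det_pos.ne'.isUnit,
        Matrix.one_mulVec]
    have h1 : z ⬝ᵥ (Mt *ᵥ z) = z k := by
      rw [hMz, dotProduct_single, mul_one]
    have h2 : z ⬝ᵥ z ≤ z ⬝ᵥ (Mt *ᵥ z) := by
      have he : z ⬝ᵥ (Mt *ᵥ z) = z ⬝ᵥ z + t * (z ⬝ᵥ (Ω *ᵥ z)) := by
        rw [hMtdef, Matrix.add_mulVec, Matrix.one_mulVec, dotProduct_add,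
          Matrix.smul_mulVec, dotProduct_smul, smul_eq_mul]
      have hq : (0 : ℝ) ≤ z ⬝ᵥ (Ω *ᵥ z) := by simpa using hpos.posSemidef.dotProduct_mulVec_nonneg z
      nlinarith
    have h3 : z k ^ 2 ≤ z ⬝ᵥ z := by
      have : z ⬝ᵥ z = ∑ l, z l * z l := rfl
      rw [this, sq]
      exact Finset.single_le_sum (f := fun l => z l * z l)
        (fun l _ => mul_self_nonneg _) (Finset.mem_univ k)
    have h4 : z k ^ 2 ≤ z k := by
      calc z k ^ 2 ≤ z ⬝ᵥ z := h3
        _ ≤ z ⬝ᵥ (Mt *ᵥ z) := h2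
        _ = z k := h1
    constructor
    · rw [← hzk]; nlinarith [sq_nonneg (z k)]
    · rw [← hzk]; nlinarith
  have hsymA : Mt⁻¹ j i = Mt⁻¹ i j := by
    have h := psi_aux_inv_symm (Ω := Ω) hsym t
    have := congrFun (congrFun h i) j
    simpa [Matrix.transpose_apply] using this
  have hq : ∀ x : Fin d → ℝ, 0 ≤ x ⬝ᵥ (Mt⁻¹ *ᵥ x) := fun x => by
    simpa using hA.posSemidef.dotProduct_mulVec_nonneg x
  have e1 := hq (Pi.single i 1 - Pi.single j 1)
  have e2 := hq (Pi.single i 1 + Pi.single j 1)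
  simp only [Matrix.mulVec_sub, Matrix.mulVec_add, sub_dotProduct,
    add_dotProduct, dotProduct_sub, dotProduct_add,
    Matrix.mulVec_single_one, Matrix.mulVec_single, mul_one] at e1 e2
  have hii := hdiag i
  have hjj := hdiag j
  simp only [single_dotProduct, Pi.smul_apply, op_smul_eq_mul, Matrix.col_apply, one_mul,
    mul_one] at e1 e2
  rw [abs_le]
  constructor <;> nlinarith [hii.1, hii.2, hjj.1, hjj.2]

private lemma psi_aux_cont (hpos : Ω.PosDef) (i j : Fin d) :
    ContinuousOn
      (fun t : ℝ => t ^ (-(1 : ℝ) / 2) *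
        ((1 : Matrix (Fin d) (Fin d) ℝ) + t • Ω).det ^ (-(1 : ℝ) / 2) *
        (((1 : Matrix (Fin d) (Fin d) ℝ) + t • Ω)⁻¹ i j))
      (Set.Ioi (0 : ℝ)) := by
  have hMcont : Continuous fun t : ℝ => (1 : Matrix (Fin d) (Fin d) ℝ) + t • Ω :=
    continuous_const.add (continuous_id.smul continuous_const)
  have hdet : Continuous fun t : ℝ => ((1 : Matrix (Fin d) (Fin d) ℝ) + t • Ω).det :=
    hMcont.matrix_det
  intro t ht
  have ht' : (0 : ℝ) < t := ht
  have hdetpos : 0 < ((1 : Matrix (Fin d) (Fin d) ℝ) + t • Ω).det :=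
    (psi_aux_posdef hpos ht'.le).det_pos
  apply ContinuousAt.continuousWithinAt
  have h1 : ContinuousAt (fun s : ℝ => s ^ (-(1 : ℝ) / 2)) t :=
    Real.continuousAt_rpow_const t _ (Or.inl ht'.ne')
  have h2 : ContinuousAt
      (fun s : ℝ => ((1 : Matrix (Fin d) (Fin d) ℝ) + s • Ω).det ^ (-(1 : ℝ) / 2)) t :=
    hdet.continuousAt.rpow_const (Or.inl hdetpos.ne')
  have h3 : ContinuousAt
      (fun s : ℝ => ((1 : Matrix (Fin d) (Fin d) ℝ) + s • Ω)⁻¹ i j) t := by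
    have heq : (fun s : ℝ => ((1 : Matrix (Fin d) (Fin d) ℝ) + s • Ω)⁻¹ i j)
        = fun s : ℝ => (((1 : Matrix (Fin d) (Fin d) ℝ) + s • Ω).det)⁻¹ *
            (((1 : Matrix (Fin d) (Fin d) ℝ) + s • Ω).adjugate i j) := by
      funext s
      rw [Matrix.inv_def]
      simp [Ring.inverse_eq_inv', smul_eq_mul]
    rw [heq]
    exact (hdet.continuousAt.inv₀ hdetpos.ne').mul
      ((hMcont.matrix_adjugate).matrix_elem i j).continuousAt
  exact (h1.mul h2).mul h3

private lemma psi_aux_integrable (hd : 2 ≤ d) (hpos : Ω.PosDef) (hsym : Ω.IsSymm)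
    (i j : Fin d) :
    IntegrableOn
      (fun t : ℝ => t ^ (-(1 : ℝ) / 2) *
        ((1 : Matrix (Fin d) (Fin d) ℝ) + t • Ω).det ^ (-(1 : ℝ) / 2) *
        (((1 : Matrix (Fin d) (Fin d) ℝ) + t • Ω)⁻¹ i j))
      (Set.Ioi (0 : ℝ)) := by
  set f : ℝ → ℝ := fun t : ℝ => t ^ (-(1 : ℝ) / 2) *
      ((1 : Matrix (Fin d) (Fin d) ℝ) + t • Ω).det ^ (-(1 : ℝ) / 2) *
      (((1 : Matrix (Fin d) (Fin d) ℝ) + t • Ω)⁻¹ i j) with hfdef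
  have hmeas : AEStronglyMeasurable f (volume.restrict (Set.Ioi (0 : ℝ))) :=
    (psi_aux_cont hpos i j).aestronglyMeasurable measurableSet_Ioi
  have hbound : ∀ t : ℝ, 0 < t →
      ‖f t‖ ≤ t ^ (-(1 : ℝ) / 2) *
        ((1 : Matrix (Fin d) (Fin d) ℝ) + t • Ω).det ^ (-(1 : ℝ) / 2) := by
    intro t ht
    have h1 : (0 : ℝ) ≤ t ^ (-(1 : ℝ) / 2) := Real.rpow_nonneg ht.le _
    have h2 : (0 : ℝ) ≤ ((1 : Matrix (Fin d) (Fin d) ℝ) + t • Ω).det ^ (-(1 : ℝ) / 2) :=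
      Real.rpow_nonneg (psi_aux_posdef hpos ht.le).det_pos.le _
    have h3 := psi_aux_entry_bound hpos hsym ht.le i j
    rw [hfdef]
    simp only [Real.norm_eq_abs, abs_mul, abs_of_nonneg h1, abs_of_nonneg h2]
    calc t ^ (-(1 : ℝ) / 2) * ((1 : Matrix (Fin d) (Fin d) ℝ) + t • Ω).det ^ (-(1 : ℝ) / 2) *
          |((1 : Matrix (Fin d) (Fin d) ℝ) + t • Ω)⁻¹ i j|
        ≤ t ^ (-(1 : ℝ) / 2) *
            ((1 : Matrix (Fin d) (Fin d) ℝ) + t • Ω).det ^ (-(1 : ℝ) / 2) * 1 :=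
          mul_le_mul_of_nonneg_left h3 (mul_nonneg h1 h2)
      _ = _ := mul_one _
  have hIoc : IntegrableOn f (Set.Ioc (0 : ℝ) 1) := by
    have hg : IntegrableOn (fun t : ℝ => t ^ (-(1 : ℝ) / 2)) (Set.Ioc (0 : ℝ) 1) := by
      have := intervalIntegral.intervalIntegrable_rpow' (a := (0 : ℝ)) (b := 1)
        (by norm_num : (-1 : ℝ) < -(1 : ℝ) / 2)
      rwa [intervalIntegrable_iff_integrableOn_Ioc_of_le zero_le_one] at this
    refine Integrable.mono hg
      (((psi_aux_cont hpos i j).mono Set.Ioc_subset_Ioi_self).aestronglyMeasurable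
        measurableSet_Ioc) ?_
    rw [ae_restrict_iff' measurableSet_Ioc]
    filter_upwards with t
    intro ht
    have h2 : ((1 : Matrix (Fin d) (Fin d) ℝ) + t • Ω).det ^ (-(1 : ℝ) / 2) ≤ 1 :=
      Real.rpow_le_one_of_one_le_of_nonpos (psi_aux_det_ge_one hpos ht.1.le) (by norm_num)
    have h1 : (0 : ℝ) ≤ t ^ (-(1 : ℝ) / 2) := Real.rpow_nonneg ht.1.le _
    calc ‖f t‖ ≤ t ^ (-(1 : ℝ) / 2) *
          ((1 : Matrix (Fin d) (Fin d) ℝ) + t • Ω).det ^ (-(1 : ℝ) / 2) := hbound t ht.1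
      _ ≤ t ^ (-(1 : ℝ) / 2) * 1 := mul_le_mul_of_nonneg_left h2 h1
      _ = t ^ (-(1 : ℝ) / 2) := mul_one _
      _ ≤ ‖t ^ (-(1 : ℝ) / 2)‖ := le_abs_self _
  have hIoi : IntegrableOn f (Set.Ioi (1 : ℝ)) := by
    have hg : IntegrableOn (fun t : ℝ => Ω.det ^ (-(1 : ℝ) / 2) * t ^ (-(3 : ℝ) / 2))
        (Set.Ioi (1 : ℝ)) :=
      (integrableOn_Ioi_rpow_of_lt (by norm_num : (-3 : ℝ) / 2 < -1) one_pos).const_mul _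
    refine Integrable.mono hg
      (((psi_aux_cont hpos i j).mono fun t (ht : t ∈ Set.Ioi (1:ℝ)) =>
        Set.mem_Ioi.mpr (lt_trans one_pos ht)).aestronglyMeasurable measurableSet_Ioi) ?_
    rw [ae_restrict_iff' measurableSet_Ioi]
    filter_upwards with t
    intro ht
    have ht0 : (0 : ℝ) < t := lt_trans one_pos ht
    have hΩdet : (0 : ℝ) < Ω.det := hpos.det_pos
    have hpow : (0 : ℝ) < t ^ d * Ω.det := mul_pos (pow_pos ht0 d) hΩdet
    have hle : ((1 : Matrix (Fin d) (Fin d) ℝ) + t • Ω).det ^ (-(1 : ℝ) / 2)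
        ≤ (t ^ d * Ω.det) ^ (-(1 : ℝ) / 2) :=
      Real.rpow_le_rpow_of_nonpos hpow (psi_aux_det_ge hpos ht0.le) (by norm_num)
    have hsplit : (t ^ d * Ω.det) ^ (-(1 : ℝ) / 2)
        = t ^ ((d : ℝ) * (-(1 : ℝ) / 2)) * Ω.det ^ (-(1 : ℝ) / 2) := by
      rw [Real.mul_rpow (pow_nonneg ht0.le d) hΩdet.le, ← Real.rpow_natCast t d,
        ← Real.rpow_mul ht0.le]
    have hexp : t ^ (-(1 : ℝ) / 2) * t ^ ((d : ℝ) * (-(1 : ℝ) / 2))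
        = t ^ (-(1 : ℝ) / 2 + (d : ℝ) * (-(1 : ℝ) / 2)) := (Real.rpow_add ht0 _ _).symm
    have hexp2 : t ^ (-(1 : ℝ) / 2 + (d : ℝ) * (-(1 : ℝ) / 2)) ≤ t ^ (-(3 : ℝ) / 2) := by
      apply Real.rpow_le_rpow_of_exponent_le ht.le
      have hd2 : (2 : ℝ) ≤ (d : ℝ) := by exact_mod_cast hd
      nlinarith
    have h1 : (0 : ℝ) ≤ t ^ (-(1 : ℝ) / 2) := Real.rpow_nonneg ht0.le _
    calc ‖f t‖ ≤ t ^ (-(1 : ℝ) / 2) *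
          ((1 : Matrix (Fin d) (Fin d) ℝ) + t • Ω).det ^ (-(1 : ℝ) / 2) := hbound t ht0
      _ ≤ t ^ (-(1 : ℝ) / 2) * ((t ^ d * Ω.det) ^ (-(1 : ℝ) / 2)) :=
          mul_le_mul_of_nonneg_left hle h1
      _ = Ω.det ^ (-(1 : ℝ) / 2) * (t ^ (-(1 : ℝ) / 2) * t ^ ((d : ℝ) * (-(1 : ℝ) / 2))) := by
          rw [hsplit]; ring
      _ = Ω.det ^ (-(1 : ℝ) / 2) * t ^ (-(1 : ℝ) / 2 + (d : ℝ) * (-(1 : ℝ) / 2)) := by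
          rw [hexp]
      _ ≤ Ω.det ^ (-(1 : ℝ) / 2) * t ^ (-(3 : ℝ) / 2) :=
          mul_le_mul_of_nonneg_left hexp2 (Real.rpow_nonneg hΩdet.le _)
      _ ≤ ‖Ω.det ^ (-(1 : ℝ) / 2) * t ^ (-(3 : ℝ) / 2)‖ := le_abs_self _
  have hunion : Set.Ioi (0 : ℝ) = Set.Ioc (0 : ℝ) 1 ∪ Set.Ioi (1 : ℝ) :=
    (Set.Ioc_union_Ioi_eq_Ioi zero_le_one).symm
  rw [IntegrableOn, hunion]
  exact (hIoc.union hIoi)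

end Aux

/-- For a `d×d` real symmetric positive definite matrix `Ω` with `d ≥ 2`, the matrix
`Ψ(Ω) = ∫₀^∞ t^{-1/2} det(I + tΩ)^{-1/2} (I + tΩ)⁻¹ dt` (entrywise integral) is well defined
(the integrand is integrable on `(0,∞)` entrywise) and is symmetric positive definite. -/
theorem psi_well_defined_posdef (d : ℕ) (hd : 2 ≤ d) (Ω : Matrix (Fin d) (Fin d) ℝ)
    (hsym : Ω.IsSymm) (hpos : Ω.PosDef) :
    (∀ i j : Fin d,
        IntegrableOn
          (fun t : ℝ => t ^ (-(1 : ℝ) / 2) *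
            ((1 : Matrix (Fin d) (Fin d) ℝ) + t • Ω).det ^ (-(1 : ℝ) / 2) *
            (((1 : Matrix (Fin d) (Fin d) ℝ) + t • Ω)⁻¹ i j))
          (Set.Ioi (0 : ℝ))) ∧
      (Matrix.of fun i j : Fin d =>
          ∫ t in Set.Ioi (0 : ℝ), t ^ (-(1 : ℝ) / 2) *
            ((1 : Matrix (Fin d) (Fin d) ℝ) + t • Ω).det ^ (-(1 : ℝ) / 2) *
            (((1 : Matrix (Fin d) (Fin d) ℝ) + t • Ω)⁻¹ i j)).IsSymm ∧
      (Matrix.of fun i j : Fin d =>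
          ∫ t in Set.Ioi (0 : ℝ), t ^ (-(1 : ℝ) / 2) *
            ((1 : Matrix (Fin d) (Fin d) ℝ) + t • Ω).det ^ (-(1 : ℝ) / 2) *
            (((1 : Matrix (Fin d) (Fin d) ℝ) + t • Ω)⁻¹ i j)).PosDef := by
  have hInt : ∀ i j : Fin d,
      IntegrableOn
        (fun t : ℝ => t ^ (-(1 : ℝ) / 2) *
          ((1 : Matrix (Fin d) (Fin d) ℝ) + t • Ω).det ^ (-(1 : ℝ) / 2) *
          (((1 : Matrix (Fin d) (Fin d) ℝ) + t • Ω)⁻¹ i j))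
        (Set.Ioi (0 : ℝ)) := fun i j => psi_aux_integrable hd hpos hsym i j
  have hSymm : (Matrix.of fun i j : Fin d =>
      ∫ t in Set.Ioi (0 : ℝ), t ^ (-(1 : ℝ) / 2) *
        ((1 : Matrix (Fin d) (Fin d) ℝ) + t • Ω).det ^ (-(1 : ℝ) / 2) *
        (((1 : Matrix (Fin d) (Fin d) ℝ) + t • Ω)⁻¹ i j)).IsSymm := by
    show _ᵀ = _
    ext i j
    simp only [Matrix.transpose_apply, Matrix.of_apply]
    congr 1
    funext t
    congr 1
    have h := psi_aux_inv_symm (Ω := Ω) hsym t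
    have := congrFun (congrFun h i) j
    simpa [Matrix.transpose_apply] using this
  refine ⟨hInt, hSymm, Matrix.PosDef.of_dotProduct_mulVec_pos ?_ fun x hx => ?_⟩
  · show _ᴴ = _
    rw [Matrix.conjTranspose_eq_transpose_of_trivial]
    exact hSymm
  · rw [star_trivial]
    set c : ℝ → ℝ := fun t => t ^ (-(1 : ℝ) / 2) *
      ((1 : Matrix (Fin d) (Fin d) ℝ) + t • Ω).det ^ (-(1 : ℝ) / 2) with hcdef
    have hc : ∀ t : ℝ, 0 < t → 0 < c t := fun t ht =>
      mul_pos (Real.rpow_pos_of_pos ht _)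
        (Real.rpow_pos_of_pos (psi_aux_posdef hpos ht.le).det_pos _)
    have hquad : ∀ t : ℝ, 0 < t →
        0 < x ⬝ᵥ (((1 : Matrix (Fin d) (Fin d) ℝ) + t • Ω)⁻¹ *ᵥ x) := fun t ht => by
      have := (psi_aux_posdef hpos ht.le).inv.dotProduct_mulVec_pos hx
      simpa using this
    set F : ℝ → ℝ := fun t => c t *
      (x ⬝ᵥ (((1 : Matrix (Fin d) (Fin d) ℝ) + t • Ω)⁻¹ *ᵥ x)) with hFdef
    have hFint : IntegrableOn F (Set.Ioi (0 : ℝ)) := by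
      have heq : F = fun t => ∑ i : Fin d, ∑ j : Fin d, (x i * x j) *
          (c t * (((1 : Matrix (Fin d) (Fin d) ℝ) + t • Ω)⁻¹ i j)) := by
        funext t
        rw [hFdef]
        simp only [dotProduct, Matrix.mulVec, Finset.mul_sum]
        refine Finset.sum_congr rfl fun i _ => Finset.sum_congr rfl fun j _ => by ring
      rw [heq]
      refine integrable_finset_sum _ fun i _ => integrable_finset_sum _ fun j _ => ?_
      have h : Integrable (fun t : ℝ => c t *
          (((1 : Matrix (Fin d) (Fin d) ℝ) + t • Ω)⁻¹ i j))
          (volume.restrict (Set.Ioi (0 : ℝ))) := by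
        have := hInt i j
        simpa [hcdef, mul_assoc, IntegrableOn] using this
      exact h.const_mul _
    have hIeq : (x ⬝ᵥ ((Matrix.of fun i j : Fin d =>
        ∫ t in Set.Ioi (0 : ℝ), t ^ (-(1 : ℝ) / 2) *
          ((1 : Matrix (Fin d) (Fin d) ℝ) + t • Ω).det ^ (-(1 : ℝ) / 2) *
          (((1 : Matrix (Fin d) (Fin d) ℝ) + t • Ω)⁻¹ i j)) *ᵥ x))
        = ∫ t in Set.Ioi (0 : ℝ), F t := by
      have hint2 : ∀ (i j : Fin d), Integrable (fun t : ℝ => (x i * x j) *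
          (c t * (((1 : Matrix (Fin d) (Fin d) ℝ) + t • Ω)⁻¹ i j)))
          (volume.restrict (Set.Ioi (0 : ℝ))) := by
        intro i j
        have h : Integrable (fun t : ℝ => c t *
            (((1 : Matrix (Fin d) (Fin d) ℝ) + t • Ω)⁻¹ i j))
            (volume.restrict (Set.Ioi (0 : ℝ))) := by
          have := hInt i j
          simpa [hcdef, mul_assoc, IntegrableOn] using this
        exact h.const_mul _
      calc x ⬝ᵥ ((Matrix.of fun i j : Fin d =>
            ∫ t in Set.Ioi (0 : ℝ), t ^ (-(1 : ℝ) / 2) *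
              ((1 : Matrix (Fin d) (Fin d) ℝ) + t • Ω).det ^ (-(1 : ℝ) / 2) *
              (((1 : Matrix (Fin d) (Fin d) ℝ) + t • Ω)⁻¹ i j)) *ᵥ x)
          = ∑ i : Fin d, ∑ j : Fin d, (x i * x j) *
              ∫ t in Set.Ioi (0 : ℝ), c t *
                (((1 : Matrix (Fin d) (Fin d) ℝ) + t • Ω)⁻¹ i j) := by
            simp only [dotProduct, Matrix.mulVec, Matrix.of_apply, Finset.mul_sum,
              hcdef, mul_assoc]
            refine Finset.sum_congr rfl fun i _ => Finset.sum_congr rfl fun j _ => by ring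
        _ = ∑ i : Fin d, ∑ j : Fin d,
              ∫ t in Set.Ioi (0 : ℝ), (x i * x j) * (c t *
                (((1 : Matrix (Fin d) (Fin d) ℝ) + t • Ω)⁻¹ i j)) := by
            refine Finset.sum_congr rfl fun i _ => Finset.sum_congr rfl fun j _ => ?_
            rw [MeasureTheory.integral_const_mul]
        _ = ∫ t in Set.Ioi (0 : ℝ), ∑ i : Fin d, ∑ j : Fin d, (x i * x j) * (c t *
              (((1 : Matrix (Fin d) (Fin d) ℝ) + t • Ω)⁻¹ i j)) := by
            rw [MeasureTheory.integral_finset_sum _ fun i _ =>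
              integrable_finset_sum _ fun j _ => hint2 i j]
            refine Finset.sum_congr rfl fun i _ => ?_
            rw [MeasureTheory.integral_finset_sum _ fun j _ => hint2 i j]
        _ = ∫ t in Set.Ioi (0 : ℝ), F t := by
            refine integral_congr_ae (Filter.Eventually.of_forall fun t => ?_)
            rw [hFdef]
            simp only [dotProduct, Matrix.mulVec, Finset.mul_sum]
            refine (Finset.sum_congr rfl fun i _ => Finset.sum_congr rfl fun j _ => by ring)
    rw [hIeq]
    have hFpos : ∀ t : ℝ, t ∈ Set.Ioi (0 : ℝ) → 0 < F t := fun t ht =>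
      mul_pos (hc t ht) (hquad t ht)
    rw [show (0 : ℝ) = 0 from rfl]
    refine (setIntegral_pos_iff_support_of_nonneg_ae ?_ hFint).mpr ?_
    · have hmem : ∀ᵐ t ∂(volume.restrict (Set.Ioi (0 : ℝ))), t ∈ Set.Ioi (0 : ℝ) :=
        ae_restrict_mem measurableSet_Ioi
      exact hmem.mono fun t ht => (hFpos t ht).le
    · have hsub : Set.Ioi (0 : ℝ) ⊆ Function.support F := fun t ht => (hFpos t ht).ne'
      rw [Set.inter_eq_self_of_subset_right hsub, Real.volume_Ioi]
      exact ENNReal.zero_lt_top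
end

section
/- For a ≥ 2, the quantity Ω₂₂(a) := (1/|S²|) ∫_{S²} ω₂² / (a ω₁² + ω₂² + ω₃²) dω satisfies c · a^{-1/2} ≤ Ω₂₂(a) ≤ C · a^{-1/2} for absolute constants 0 < c ≤ C < ∞. -/
open MeasureTheory Set Metric

noncomputable abbrev E3 := EuclideanSpace ℝ (Fin 3)

noncomputable def ff (a : ℝ) (x : E3) : ℝ :=
  (x 1) ^ 2 / (a * (x 0) ^ 2 + (x 1) ^ 2 + (x 2) ^ 2)

lemma ff_meas (a : ℝ) : Measurable (ff a) := by
  have h : ∀ i : Fin 3, Measurable fun x : E3 => x i := fun i =>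
    (measurable_pi_apply i).comp (MeasurableEquiv.toLp 2 (Fin 3 → ℝ)).symm.measurable
  exact (((h 1).pow_const 2).div ((((measurable_const.mul ((h 0).pow_const 2)).add
    ((h 1).pow_const 2)).add ((h 2).pow_const 2))))

lemma norm_sq_E3 (x : E3) : ‖x‖ ^ 2 = (x 0) ^ 2 + (x 1) ^ 2 + (x 2) ^ 2 := by
  rw [EuclideanSpace.norm_eq, Real.sq_sqrt (by positivity)]
  simp [Fin.sum_univ_three]

lemma ff_nonneg {a : ℝ} (ha : 0 ≤ a) (x : E3) : 0 ≤ ff a x :=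
  div_nonneg (by positivity) (by positivity)

lemma ff_le_one {a : ℝ} (ha : 1 ≤ a) (x : E3) : ff a x ≤ 1 := by
  unfold ff
  rcases eq_or_lt_of_le (show (0:ℝ) ≤ a * (x 0) ^ 2 + (x 1) ^ 2 + (x 2) ^ 2 by positivity) with h | h
  · simp [← h]
  · rw [div_le_one h]; nlinarith [sq_nonneg (x 0), sq_nonneg (x 2)]

lemma ff_smul {a : ℝ} (ha : 1 ≤ a) {c : ℝ} (hc : c ≠ 0) {x : E3} (hx : x ≠ 0) :
    ff a (c • x) = ff a x := by
  have hn : 0 < ‖x‖ := norm_pos_iff.2 hx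
  have hd : 0 < a * (x 0) ^ 2 + (x 1) ^ 2 + (x 2) ^ 2 := by
    have h2 := norm_sq_E3 x
    nlinarith [sq_nonneg (x 0), sq_nonneg (x 1), sq_nonneg (x 2)]
  have happ : ∀ i : Fin 3, (c • x) i = c * x i := fun i => rfl
  unfold ff
  rw [happ 0, happ 1, happ 2]
  have h3 : a * (c * x 0) ^ 2 + (c * x 1) ^ 2 + (c * x 2) ^ 2
      = c ^ 2 * (a * (x 0) ^ 2 + (x 1) ^ 2 + (x 2) ^ 2) := by ring
  rw [h3, mul_pow, mul_div_mul_left _ _ (pow_ne_zero 2 hc)]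

lemma polar (a : ℝ) (ha : 1 ≤ a) :
    (∫ ω : sphere (0 : E3) 1, ff a (ω : E3) ∂((volume : Measure E3).toSphere))
      = 3 * ∫ x in ball (0 : E3) 1, ff a x := by
  have hdim : Module.finrank ℝ E3 = 3 := finrank_euclideanSpace_fin
  set μ : Measure E3 := volume with hμ
  set G : sphere (0 : E3) 1 × Ioi (0:ℝ) → ℝ :=
    fun p => ff a (p.1 : E3) * (Iio (⟨1, Set.mem_Ioi.2 one_pos⟩ : Ioi (0:ℝ))).indicator (fun _ => (1:ℝ)) p.2
    with hG
  have key := (μ.measurePreserving_homeomorphUnitSphereProd).integral_comp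
    (Homeomorph.measurableEmbedding _) G
  have hGcomp : ∀ x : ({0}ᶜ : Set E3), G (homeomorphUnitSphereProd E3 x)
      = (ball (0:E3) 1).indicator (ff a) x := by
    rintro ⟨x, hx⟩
    have hx0 : x ≠ 0 := hx
    have hnorm : ‖x‖ ≠ 0 := norm_ne_zero_iff.2 hx0
    simp only [hG, homeomorphUnitSphereProd_apply_fst_coe, homeomorphUnitSphereProd_apply_snd_coe]
    rw [ff_smul ha (inv_ne_zero hnorm) hx0]
    have hmem : ((homeomorphUnitSphereProd E3) ⟨x, hx⟩).2
        ∈ Iio (⟨1, Set.mem_Ioi.2 one_pos⟩ : Ioi (0:ℝ)) ↔ ‖x‖ < 1 := by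
      rw [Set.mem_Iio, ← Subtype.coe_lt_coe, homeomorphUnitSphereProd_apply_snd_coe]
    by_cases hb : ‖x‖ < 1
    · rw [Set.indicator_of_mem (hmem.2 hb), Set.indicator_of_mem (mem_ball_zero_iff.2 hb), mul_one]
    · rw [Set.indicator_of_notMem, Set.indicator_of_notMem, mul_zero]
      · exact fun h => hb (mem_ball_zero_iff.1 h)
      · exact fun h => hb (hmem.1 h)
  have hLHS : (∫ x : ({0}ᶜ : Set E3), G (homeomorphUnitSphereProd E3 x)
        ∂(Measure.comap Subtype.val μ)) = ∫ x in ball (0:E3) 1, ff a x ∂μ := by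
    rw [integral_congr_ae (Filter.Eventually.of_forall hGcomp),
      integral_subtype_comap (measurableSet_singleton 0).compl,
      restrict_compl_singleton, integral_indicator measurableSet_ball]
  have hRHS : (∫ p, G p ∂(μ.toSphere.prod
        (Measure.volumeIoiPow (Module.finrank ℝ E3 - 1))))
      = (∫ ω : sphere (0 : E3) 1, ff a (ω : E3) ∂μ.toSphere) * (1/3) := by
    rw [hdim]
    show (∫ p : sphere (0 : E3) 1 × Ioi (0:ℝ), ff a (p.1 : E3) *
        (Iio (⟨1, Set.mem_Ioi.2 one_pos⟩ : Ioi (0:ℝ))).indicator (fun _ => (1:ℝ)) p.2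
        ∂(μ.toSphere.prod (Measure.volumeIoiPow 2))) = _
    rw [integral_prod_mul (fun ω : sphere (0 : E3) 1 => ff a (ω : E3))
        (fun r : Ioi (0:ℝ) => (Iio (⟨1, Set.mem_Ioi.2 one_pos⟩ : Ioi (0:ℝ))).indicator (fun _ => (1:ℝ)) r)]
    congr 1
    rw [integral_indicator_const _ measurableSet_Iio, measureReal_def, Measure.volumeIoiPow_apply_Iio,
      ENNReal.toReal_ofReal (by norm_num)]
    norm_num
  rw [hLHS, hRHS] at key
  linarith

lemma ff_intOn {a : ℝ} (ha : 1 ≤ a) {s : Set E3} (hs : volume s ≠ ⊤) :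
    IntegrableOn (ff a) s volume := by
  refine Measure.integrableOn_of_bounded hs (ff_meas a).aestronglyMeasurable
    (ae_of_all _ fun x => ?_) (M := 1)
  rw [Real.norm_eq_abs, abs_of_nonneg (ff_nonneg (by linarith) x)]
  exact ff_le_one ha x

noncomputable def φ3 := (MeasurableEquiv.toLp 2 (Fin 3 → ℝ)).symm

noncomputable def boxS (a : ℝ) : Fin 3 → Set ℝ :=
  ![Set.Icc (-(4 * Real.sqrt a)⁻¹) (4 * Real.sqrt a)⁻¹,
    Set.Icc (4⁻¹:ℝ) 2⁻¹, Set.Icc (4⁻¹:ℝ) 2⁻¹]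

noncomputable def boxB (a : ℝ) : Set E3 := ⇑φ3 ⁻¹' (Set.univ.pi (boxS a))

lemma boxB_meas (a : ℝ) : MeasurableSet (boxB a) := by
  apply φ3.measurable
  exact MeasurableSet.univ_pi fun i => by
    fin_cases i <;> exact measurableSet_Icc

lemma mem_boxB {a : ℝ} {x : E3} : x ∈ boxB a ↔
    x 0 ∈ Set.Icc (-(4 * Real.sqrt a)⁻¹) (4 * Real.sqrt a)⁻¹ ∧
    x 1 ∈ Set.Icc (4⁻¹:ℝ) 2⁻¹ ∧ x 2 ∈ Set.Icc (4⁻¹:ℝ) 2⁻¹ := by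
  simp only [boxB, Set.mem_preimage, Set.mem_univ_pi]
  constructor
  · intro h; exact ⟨h 0, h 1, h 2⟩
  · rintro ⟨h0, h1, h2⟩ i; fin_cases i <;> assumption

lemma boxB_volume {a : ℝ} (ha : 2 ≤ a) :
    (volume (boxB a)).toReal = (32 * Real.sqrt a)⁻¹ := by
  have hsa : 0 < Real.sqrt a := Real.sqrt_pos.2 (by linarith)
  have h1 : volume (boxB a) = volume (Set.univ.pi (boxS a)) :=
    (EuclideanSpace.volume_preserving_symm_measurableEquiv_toLp (Fin 3)).measure_preimage
      (MeasurableSet.univ_pi fun i => by fin_cases i <;> exact measurableSet_Icc).nullMeasurableSet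
  rw [h1, volume_pi_pi]
  have h0 : volume (boxS a 0) = ENNReal.ofReal (2 * (4 * Real.sqrt a)⁻¹) := by
    rw [show boxS a 0 = Set.Icc (-(4 * Real.sqrt a)⁻¹) (4 * Real.sqrt a)⁻¹ from rfl, Real.volume_Icc]
    congr 1; ring
  have h1 : volume (boxS a 1) = ENNReal.ofReal (4⁻¹ : ℝ) := by
    rw [show boxS a 1 = Set.Icc (4⁻¹:ℝ) 2⁻¹ from rfl, Real.volume_Icc]; congr 1; norm_num
  have h2 : volume (boxS a 2) = ENNReal.ofReal (4⁻¹ : ℝ) := by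
    rw [show boxS a 2 = Set.Icc (4⁻¹:ℝ) 2⁻¹ from rfl, Real.volume_Icc]; congr 1; norm_num
  rw [Fin.prod_univ_three, h0, h1, h2,
    ← ENNReal.ofReal_mul (by positivity), ← ENNReal.ofReal_mul (by positivity),
    ENNReal.toReal_ofReal (by positivity)]
  field_simp
  ring

lemma lower_bound {a : ℝ} (ha : 2 ≤ a) :
    (288 * Real.sqrt a)⁻¹ ≤ ∫ x in ball (0 : E3) 1, ff a x := by
  have ha1 : (1:ℝ) ≤ a := by linarith
  have hsa : 1 ≤ Real.sqrt a := by
    rw [show (1:ℝ) = Real.sqrt 1 by simp]; exact Real.sqrt_le_sqrt ha1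
  have hsa0 : 0 < Real.sqrt a := by linarith
  have hr : (0:ℝ) < (4 * Real.sqrt a)⁻¹ := by positivity
  have hrle : (4 * Real.sqrt a)⁻¹ ≤ 4⁻¹ := by
    rw [inv_le_inv₀ (by positivity) (by norm_num)]
    nlinarith
  have hsq : Real.sqrt a * Real.sqrt a = a := Real.mul_self_sqrt (by linarith)
  -- box is inside the ball
  have hBsub : boxB a ⊆ ball (0 : E3) 1 := by
    intro x hx
    obtain ⟨h0, h1, h2⟩ := mem_boxB.1 hx
    rw [mem_ball_zero_iff]
    have hn2 : ‖x‖ ^ 2 = (x 0) ^ 2 + (x 1) ^ 2 + (x 2) ^ 2 := norm_sq_E3 x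
    have e0 : (x 0) ^ 2 ≤ (4⁻¹:ℝ) ^ 2 :=
      sq_le_sq' (by linarith [h0.1]) (by linarith [h0.2])
    have e1 : (x 1) ^ 2 ≤ (2⁻¹:ℝ) ^ 2 := sq_le_sq' (by linarith [h1.1]) h1.2
    have e2 : (x 2) ^ 2 ≤ (2⁻¹:ℝ) ^ 2 := sq_le_sq' (by linarith [h2.1]) h2.2
    nlinarith [norm_nonneg x]
  -- ff is at least 1/9 on the box
  have hlow : ∀ x ∈ boxB a, (9:ℝ)⁻¹ ≤ ff a x := by
    intro x hx
    obtain ⟨h0, h1, h2⟩ := mem_boxB.1 hx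
    have hnum : (4⁻¹:ℝ) ^ 2 ≤ (x 1) ^ 2 := by nlinarith [h1.1, h1.2]
    have hx0 : (x 0) ^ 2 ≤ (16 * a)⁻¹ := by
      have : (x 0) ^ 2 ≤ ((4 * Real.sqrt a)⁻¹) ^ 2 := sq_le_sq' h0.1 h0.2
      calc (x 0) ^ 2 ≤ ((4 * Real.sqrt a)⁻¹) ^ 2 := this
        _ = (16 * a)⁻¹ := by
            rw [inv_pow, mul_pow, Real.sq_sqrt (by linarith)]; norm_num
    have hden : a * (x 0) ^ 2 + (x 1) ^ 2 + (x 2) ^ 2 ≤ 9/16 := by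
      have : a * (x 0) ^ 2 ≤ a * (16 * a)⁻¹ := by
        apply mul_le_mul_of_nonneg_left hx0 (by linarith)
      have h16 : a * (16 * a)⁻¹ = 16⁻¹ := by field_simp
      nlinarith [h1.2, h2.2, h1.1, h2.1]
    have hdpos : 0 < a * (x 0) ^ 2 + (x 1) ^ 2 + (x 2) ^ 2 := by nlinarith [sq_nonneg (x 0)]
    rw [ff, le_div_iff₀ hdpos]
    nlinarith
  have hint : IntegrableOn (ff a) (ball (0:E3) 1) volume :=
    ff_intOn ha1 measure_ball_lt_top.ne
  have step1 : ∫ x in boxB a, ff a x ≤ ∫ x in ball (0:E3) 1, ff a x := by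
    apply setIntegral_mono_set hint
      (ae_of_all _ fun x => ff_nonneg (by linarith) x) (HasSubset.Subset.eventuallyLE hBsub)
  have step2 : (288 * Real.sqrt a)⁻¹ ≤ ∫ x in boxB a, ff a x := by
    have hBfin : volume (boxB a) ≠ ⊤ := by
      apply ne_of_lt (lt_of_le_of_lt (measure_mono hBsub) measure_ball_lt_top)
    have := setIntegral_mono_on (integrableOn_const hBfin) (hint.mono_set hBsub)
        (boxB_meas a) hlow
    rw [setIntegral_const] at this
    rw [measureReal_def, boxB_volume ha] at this
    calc (288 * Real.sqrt a)⁻¹ = (32 * Real.sqrt a)⁻¹ • (9⁻¹:ℝ) := by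
          rw [smul_eq_mul]; field_simp; ring
      _ ≤ _ := this.trans (le_refl _)
  linarith

lemma oneD {a : ℝ} (ha : 2 ≤ a) :
    ∫ t in Set.Icc (-1:ℝ) 1, 2 * (1 + a * t ^ 2)⁻¹ ≤ 2 * Real.pi * (Real.sqrt a)⁻¹ := by
  have ha0 : (0:ℝ) < a := by linarith
  have hsa0 : 0 < Real.sqrt a := Real.sqrt_pos.2 ha0
  have hsq : Real.sqrt a ^ 2 = a := Real.sq_sqrt ha0.le
  have hfun : ∀ t : ℝ, 2 * (1 + a * t ^ 2)⁻¹
      = (fun u : ℝ => 2 * (1 + u ^ 2)⁻¹) (Real.sqrt a * t) := by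
    intro t; simp only; rw [mul_pow, hsq]
  rw [MeasureTheory.integral_Icc_eq_integral_Ioc,
    ← intervalIntegral.integral_of_le (by norm_num : (-1:ℝ) ≤ 1)]
  calc (∫ t in (-1:ℝ)..1, 2 * (1 + a * t ^ 2)⁻¹)
      = ∫ t in (-1:ℝ)..1, (fun u : ℝ => 2 * (1 + u ^ 2)⁻¹) (Real.sqrt a * t) := by
        congr 1; funext t; exact hfun t
    _ = (Real.sqrt a)⁻¹ • ∫ u in (Real.sqrt a * -1)..(Real.sqrt a * 1),
          2 * (1 + u ^ 2)⁻¹ :=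
        intervalIntegral.integral_comp_mul_left (fun u : ℝ => 2 * (1 + u ^ 2)⁻¹) hsa0.ne'
    _ ≤ 2 * Real.pi * (Real.sqrt a)⁻¹ := by
        rw [smul_eq_mul]
        have h1 : (∫ u in (Real.sqrt a * -1)..(Real.sqrt a * 1), 2 * (1 + u ^ 2)⁻¹)
            = 2 * (Real.arctan (Real.sqrt a * 1) - Real.arctan (Real.sqrt a * -1)) := by
          rw [intervalIntegral.integral_const_mul, integral_inv_one_add_sq]
        rw [h1]
        have h2 : Real.arctan (Real.sqrt a * 1) < Real.pi / 2 := Real.arctan_lt_pi_div_two _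
        have h3 : -(Real.pi / 2) < Real.arctan (Real.sqrt a * -1) :=
          Real.neg_pi_div_two_lt_arctan _
        have : 2 * (Real.arctan (Real.sqrt a * 1) - Real.arctan (Real.sqrt a * -1))
            ≤ 2 * Real.pi := by linarith
        calc (Real.sqrt a)⁻¹ * (2 * (Real.arctan (Real.sqrt a * 1)
              - Real.arctan (Real.sqrt a * -1)))
            ≤ (Real.sqrt a)⁻¹ * (2 * Real.pi) := by
              apply mul_le_mul_of_nonneg_left this (by positivity)
          _ = 2 * Real.pi * (Real.sqrt a)⁻¹ := by ring

noncomputable def hh (a : ℝ) (x : E3) : ℝ := 2 * (1 + a * (x 0) ^ 2)⁻¹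

noncomputable def SS : Set E3 := ⇑φ3 ⁻¹' (Set.univ.pi fun _ : Fin 3 => Set.Icc (-1:ℝ) 1)

lemma SS_meas : MeasurableSet SS :=
  φ3.measurable (MeasurableSet.univ_pi fun _ => measurableSet_Icc)

lemma abs_coord_le_norm (x : E3) (i : Fin 3) : |x i| ≤ ‖x‖ := by
  have h := norm_sq_E3 x
  have h2 : (x i) ^ 2 ≤ ‖x‖ ^ 2 := by
    have h0 : i = 0 ∨ i = 1 ∨ i = 2 := by omega
    rcases h0 with rfl | rfl | rfl <;>
      nlinarith [sq_nonneg (x 0), sq_nonneg (x 1), sq_nonneg (x 2)]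
  calc |x i| = Real.sqrt ((x i) ^ 2) := (Real.sqrt_sq_eq_abs _).symm
    _ ≤ Real.sqrt (‖x‖ ^ 2) := Real.sqrt_le_sqrt h2
    _ = ‖x‖ := Real.sqrt_sq (norm_nonneg x)

lemma hh_meas (a : ℝ) : Measurable (hh a) := by
  have h : Measurable fun x : E3 => x 0 :=
    (measurable_pi_apply 0).comp (MeasurableEquiv.toLp 2 (Fin 3 → ℝ)).symm.measurable
  exact measurable_const.mul ((measurable_const.add
    (measurable_const.mul (h.pow_const 2))).inv)

lemma hh_nonneg {a : ℝ} (ha : 0 ≤ a) (x : E3) : 0 ≤ hh a x := by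
  unfold hh; positivity

lemma hh_le_two {a : ℝ} (ha : 0 ≤ a) (x : E3) : hh a x ≤ 2 := by
  unfold hh
  have h1 : (1:ℝ) ≤ 1 + a * (x 0) ^ 2 := by nlinarith [sq_nonneg (x 0)]
  nlinarith [inv_le_one_of_one_le₀ h1, inv_nonneg.2 (by linarith : (0:ℝ) ≤ 1 + a * (x 0)^2)]

lemma hh_intOn {a : ℝ} (ha : 0 ≤ a) {s : Set E3} (hs : volume s ≠ ⊤) :
    IntegrableOn (hh a) s volume := by
  refine Measure.integrableOn_of_bounded hs (hh_meas a).aestronglyMeasurable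
    (ae_of_all _ fun x => ?_) (M := 2)
  rw [Real.norm_eq_abs, abs_of_nonneg (hh_nonneg ha x)]
  exact hh_le_two ha x

lemma SS_vol_fin : volume SS ≠ ⊤ := by
  have h1 : volume SS = volume (Set.univ.pi fun _ : Fin 3 => Set.Icc (-1:ℝ) 1) :=
    (EuclideanSpace.volume_preserving_symm_measurableEquiv_toLp (Fin 3)).measure_preimage
      (MeasurableSet.univ_pi fun _ => measurableSet_Icc).nullMeasurableSet
  rw [h1, volume_pi_pi]
  simp [Real.volume_Icc]

lemma ball_sub_SS : ball (0 : E3) 1 ⊆ SS := by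
  intro x hx
  rw [mem_ball_zero_iff] at hx
  intro i _
  have := abs_coord_le_norm x i
  obtain ⟨h1, h2⟩ := abs_le.1 (this.trans hx.le)
  exact ⟨h1, h2⟩

noncomputable def gg (a : ℝ) : Fin 3 → ℝ → ℝ :=
  ![(Set.Icc (-1:ℝ) 1).indicator (fun t => 2 * (1 + a * t ^ 2)⁻¹),
    (Set.Icc (-1:ℝ) 1).indicator (fun _ => (1:ℝ)),
    (Set.Icc (-1:ℝ) 1).indicator (fun _ => (1:ℝ))]

lemma SS_integral (a : ℝ) :
    ∫ x in SS, hh a x = (∫ t in Set.Icc (-1:ℝ) 1, 2 * (1 + a * t ^ 2)⁻¹) * 4 := by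
  have hpi : MeasurableSet (Set.univ.pi fun _ : Fin 3 => Set.Icc (-1:ℝ) 1) :=
    MeasurableSet.univ_pi fun _ => measurableSet_Icc
  have h1 : ∫ x in SS, hh a x = ∫ x : E3, SS.indicator (hh a) x :=
    (integral_indicator SS_meas).symm
  have h2 : ∀ x : E3, SS.indicator (hh a) x
      = (Set.univ.pi fun _ : Fin 3 => Set.Icc (-1:ℝ) 1).indicator
          (fun y : Fin 3 → ℝ => 2 * (1 + a * (y 0) ^ 2)⁻¹) (φ3 x) := by
    intro x
    by_cases hx : x ∈ SS
    · rw [Set.indicator_of_mem hx, Set.indicator_of_mem (Set.mem_preimage.1 hx)]; rfl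
    · rw [Set.indicator_of_notMem hx,
        Set.indicator_of_notMem (fun h => hx (Set.mem_preimage.2 h))]
  have h3 : (∫ x : E3, (Set.univ.pi fun _ : Fin 3 => Set.Icc (-1:ℝ) 1).indicator
        (fun y : Fin 3 → ℝ => 2 * (1 + a * (y 0) ^ 2)⁻¹) (φ3 x))
      = ∫ y : Fin 3 → ℝ, (Set.univ.pi fun _ : Fin 3 => Set.Icc (-1:ℝ) 1).indicator
        (fun y : Fin 3 → ℝ => 2 * (1 + a * (y 0) ^ 2)⁻¹) y :=
    (EuclideanSpace.volume_preserving_symm_measurableEquiv_toLp (Fin 3)).integral_comp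
      φ3.measurableEmbedding _
  have h4 : ∀ y : Fin 3 → ℝ, (Set.univ.pi fun _ : Fin 3 => Set.Icc (-1:ℝ) 1).indicator
      (fun y : Fin 3 → ℝ => 2 * (1 + a * (y 0) ^ 2)⁻¹) y = ∏ i, gg a i (y i) := by
    intro y
    rw [Fin.prod_univ_three]
    by_cases hy : y ∈ Set.univ.pi fun _ : Fin 3 => Set.Icc (-1:ℝ) 1
    · have hm : ∀ i : Fin 3, y i ∈ Set.Icc (-1:ℝ) 1 := fun i => hy i (Set.mem_univ i)
      rw [Set.indicator_of_mem hy]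
      show _ = gg a 0 (y 0) * gg a 1 (y 1) * gg a 2 (y 2)
      simp only [gg, Matrix.cons_val_zero, Matrix.cons_val_one, Matrix.head_cons]
      rw [Set.indicator_of_mem (hm 0), Set.indicator_of_mem (hm 1)]
      have : gg a 2 (y 2) = 1 := by
        simp only [gg]
        rw [show ((![(Set.Icc (-1:ℝ) 1).indicator (fun t => 2 * (1 + a * t ^ 2)⁻¹),
          (Set.Icc (-1:ℝ) 1).indicator (fun _ => (1:ℝ)),
          (Set.Icc (-1:ℝ) 1).indicator (fun _ => (1:ℝ))] : Fin 3 → ℝ → ℝ) 2)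
          = (Set.Icc (-1:ℝ) 1).indicator (fun _ => (1:ℝ)) from rfl]
        rw [Set.indicator_of_mem (hm 2)]
      rw [show ((![(Set.Icc (-1:ℝ) 1).indicator (fun t => 2 * (1 + a * t ^ 2)⁻¹),
          (Set.Icc (-1:ℝ) 1).indicator (fun _ => (1:ℝ)),
          (Set.Icc (-1:ℝ) 1).indicator (fun _ => (1:ℝ))] : Fin 3 → ℝ → ℝ) 2)
          = (Set.Icc (-1:ℝ) 1).indicator (fun _ => (1:ℝ)) from rfl]
      rw [Set.indicator_of_mem (hm 2)]
      ring
    · rw [Set.indicator_of_notMem hy]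
      rw [Set.mem_univ_pi] at hy
      push_neg at hy
      obtain ⟨i, hi⟩ := hy
      have h0 : i = 0 ∨ i = 1 ∨ i = 2 := by omega
      rcases h0 with rfl | rfl | rfl
      · rw [show gg a 0 (y 0) = 0 from by
          simp only [gg, Matrix.cons_val_zero]; exact Set.indicator_of_notMem hi _]
        ring
      · rw [show gg a 1 (y 1) = 0 from by
          rw [show gg a 1 = (Set.Icc (-1:ℝ) 1).indicator (fun _ => (1:ℝ)) from rfl]
          exact Set.indicator_of_notMem hi _]
        ring
      · rw [show gg a 2 (y 2) = 0 from by
          rw [show gg a 2 = (Set.Icc (-1:ℝ) 1).indicator (fun _ => (1:ℝ)) from rfl]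
          exact Set.indicator_of_notMem hi _]
        ring
  have h5 : (∫ y : Fin 3 → ℝ, ∏ i, gg a i (y i)) = ∏ i, ∫ t : ℝ, gg a i t :=
    MeasureTheory.integral_fintype_prod_volume_eq_prod (gg a)
  have hind1 : (∫ t : ℝ, (Set.Icc (-1:ℝ) 1).indicator (fun _ => (1:ℝ)) t) = 2 := by
    rw [integral_indicator_const _ measurableSet_Icc]
    simp [Real.volume_Icc]
    norm_num
  rw [h1]
  rw [integral_congr_ae (Filter.Eventually.of_forall h2), h3,
    integral_congr_ae (Filter.Eventually.of_forall h4), h5, Fin.prod_univ_three]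
  have e0 : (∫ t : ℝ, gg a 0 t) = ∫ t in Set.Icc (-1:ℝ) 1, 2 * (1 + a * t ^ 2)⁻¹ := by
    rw [show gg a 0 = (Set.Icc (-1:ℝ) 1).indicator (fun t => 2 * (1 + a * t ^ 2)⁻¹) from rfl]
    exact integral_indicator measurableSet_Icc
  have e1 : (∫ t : ℝ, gg a 1 t) = 2 := by
    rw [show gg a 1 = (Set.Icc (-1:ℝ) 1).indicator (fun _ => (1:ℝ)) from rfl]; exact hind1
  have e2 : (∫ t : ℝ, gg a 2 t) = 2 := by
    rw [show gg a 2 = (Set.Icc (-1:ℝ) 1).indicator (fun _ => (1:ℝ)) from rfl]; exact hind1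
  rw [e0, e1, e2]; ring

lemma ff_le_hh {a : ℝ} (ha : 1 ≤ a) {x : E3} (hx : x ∈ ball (0:E3) 1) :
    ff a x ≤ hh a x := by
  have hx1 : (x 1) ^ 2 ≤ 1 := by
    have := abs_coord_le_norm x 1
    rw [mem_ball_zero_iff] at hx
    nlinarith [abs_nonneg (x 1), sq_abs (x 1)]
  have hden1 : (0:ℝ) < 1 + a * (x 0) ^ 2 := by nlinarith [sq_nonneg (x 0)]
  unfold ff hh
  rcases eq_or_lt_of_le (show (0:ℝ) ≤ a * (x 0) ^ 2 + (x 1) ^ 2 + (x 2) ^ 2 by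
      positivity) with h | h
  · rw [← h]; simp; positivity
  · rw [div_le_iff₀ h]
    have key : (x 1)^2 * (1 + a * (x 0)^2) ≤ (a * (x 0)^2 + (x 1)^2 + (x 2)^2) * 2 := by
      nlinarith [sq_nonneg (x 0), sq_nonneg (x 2), sq_nonneg (x 0 * x 1)]
    calc (x 1)^2 = ((x 1)^2 * (1 + a*(x 0)^2)) * (1 + a*(x 0)^2)⁻¹ := by
          field_simp
      _ ≤ ((a * (x 0)^2 + (x 1)^2 + (x 2)^2) * 2) * (1 + a*(x 0)^2)⁻¹ :=
          mul_le_mul_of_nonneg_right key (by positivity)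
      _ = (a * (x 0)^2 + (x 1)^2 + (x 2)^2) * (2 * (1 + a*(x 0)^2)⁻¹) := by ring
      _ ≤ 2 * (1 + a*(x 0)^2)⁻¹ * (a * (x 0)^2 + (x 1)^2 + (x 2)^2) := by rw [mul_comm]

lemma upper_bound {a : ℝ} (ha : 2 ≤ a) :
    ∫ x in ball (0 : E3) 1, ff a x ≤ 8 * Real.pi * (Real.sqrt a)⁻¹ := by
  have ha1 : (1:ℝ) ≤ a := by linarith
  have ha0 : (0:ℝ) ≤ a := by linarith
  have step1 : ∫ x in ball (0:E3) 1, ff a x ≤ ∫ x in ball (0:E3) 1, hh a x := by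
    apply setIntegral_mono_on (ff_intOn ha1 measure_ball_lt_top.ne)
      (hh_intOn ha0 measure_ball_lt_top.ne) measurableSet_ball
    exact fun x hx => ff_le_hh ha1 hx
  have step2 : ∫ x in ball (0:E3) 1, hh a x ≤ ∫ x in SS, hh a x :=
    setIntegral_mono_set (hh_intOn ha0 SS_vol_fin)
      (ae_of_all _ fun x => hh_nonneg ha0 x) (HasSubset.Subset.eventuallyLE ball_sub_SS)
  have step3 := SS_integral a
  have step4 := oneD ha
  have hsa0 : 0 < Real.sqrt a := Real.sqrt_pos.2 (by linarith)
  calc ∫ x in ball (0:E3) 1, ff a x ≤ ∫ x in SS, hh a x := step1.trans step2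
    _ = (∫ t in Set.Icc (-1:ℝ) 1, 2 * (1 + a * t ^ 2)⁻¹) * 4 := step3
    _ ≤ (2 * Real.pi * (Real.sqrt a)⁻¹) * 4 := by nlinarith
    _ = 8 * Real.pi * (Real.sqrt a)⁻¹ := by ring

/-- For `a ≥ 2`, `Ω₂₂(a) = (1/|S²|)∫_{S²} ω₂²/(aω₁²+ω₂²+ω₃²) dω ≍ a^{-1/2}` with absolute
constants, the sphere integral being taken with respect to the surface measure on the unit
sphere of `ℝ³` (here `volume.toSphere`), normalized by `|S²| = 4π`. -/
theorem sphere_integral_estimate :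
    ∃ c C : ℝ, 0 < c ∧ 0 < C ∧
      ∀ a : ℝ, 2 ≤ a →
        c * a ^ (-(1 : ℝ) / 2) ≤
            (1 / (4 * Real.pi)) *
              (∫ ω : Metric.sphere (0 : EuclideanSpace ℝ (Fin 3)) 1,
                ((ω : EuclideanSpace ℝ (Fin 3)) 1) ^ 2 /
                  (a * ((ω : EuclideanSpace ℝ (Fin 3)) 0) ^ 2 +
                    ((ω : EuclideanSpace ℝ (Fin 3)) 1) ^ 2 +
                    ((ω : EuclideanSpace ℝ (Fin 3)) 2) ^ 2)
                ∂((volume : Measure (EuclideanSpace ℝ (Fin 3))).toSphere)) ∧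
          (1 / (4 * Real.pi)) *
              (∫ ω : Metric.sphere (0 : EuclideanSpace ℝ (Fin 3)) 1,
                ((ω : EuclideanSpace ℝ (Fin 3)) 1) ^ 2 /
                  (a * ((ω : EuclideanSpace ℝ (Fin 3)) 0) ^ 2 +
                    ((ω : EuclideanSpace ℝ (Fin 3)) 1) ^ 2 +
                    ((ω : EuclideanSpace ℝ (Fin 3)) 2) ^ 2)
                ∂((volume : Measure (EuclideanSpace ℝ (Fin 3))).toSphere)) ≤
            C * a ^ (-(1 : ℝ) / 2) := by
  have hπ := Real.pi_pos
  refine ⟨(384 * Real.pi)⁻¹, 6, by positivity, by norm_num, fun a ha => ?_⟩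
  have ha1 : (1:ℝ) ≤ a := by linarith
  have hsa0 : 0 < Real.sqrt a := Real.sqrt_pos.2 (by linarith)
  have hrpow : a ^ (-(1 : ℝ) / 2) = (Real.sqrt a)⁻¹ := by
    rw [neg_div, Real.rpow_neg (by linarith), Real.sqrt_eq_rpow]
  have hI : (∫ ω : Metric.sphere (0 : EuclideanSpace ℝ (Fin 3)) 1,
      ((ω : EuclideanSpace ℝ (Fin 3)) 1) ^ 2 /
        (a * ((ω : EuclideanSpace ℝ (Fin 3)) 0) ^ 2 +
          ((ω : EuclideanSpace ℝ (Fin 3)) 1) ^ 2 +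
          ((ω : EuclideanSpace ℝ (Fin 3)) 2) ^ 2)
      ∂((volume : Measure (EuclideanSpace ℝ (Fin 3))).toSphere))
      = 3 * ∫ x in ball (0 : E3) 1, ff a x := polar a ha1
  rw [hI, hrpow]
  set J := ∫ x in ball (0 : E3) 1, ff a x with hJdef
  have hlow := lower_bound ha
  have hup := upper_bound ha
  constructor
  · calc (384 * Real.pi)⁻¹ * (Real.sqrt a)⁻¹
        = (3 / (4 * Real.pi)) * (288 * Real.sqrt a)⁻¹ := by field_simp; ring
      _ ≤ (3 / (4 * Real.pi)) * J := by
          apply mul_le_mul_of_nonneg_left hlow (by positivity)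
      _ = 1 / (4 * Real.pi) * (3 * J) := by ring
  · calc 1 / (4 * Real.pi) * (3 * J) = (3 / (4 * Real.pi)) * J := by ring
      _ ≤ (3 / (4 * Real.pi)) * (8 * Real.pi * (Real.sqrt a)⁻¹) := by
          apply mul_le_mul_of_nonneg_left hup (by positivity)
      _ = 6 * (Real.sqrt a)⁻¹ := by field_simp; ring
end
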